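/- arXiv:2407.01401 — 3 statements merged into one kernel-verified Lean document; each statement's English description precedes it below -/
import Mathlib

section
/- (Proposition 3 of the paper, instantiated for a wiretap BEC.) In the polar-secrecy-code-over-BEC setup, the mutual information security leakage satisfies I(U; Z) ≥ max( Σ_{i∈A} C_i + Σ_{j∈R} C_j − r , 0 ). -/
open scoped Classical

noncomputable section

/-- `p` is a probability mass function on the finite sample space `Ω`. -/
def IsPMF {Ω : Type} [Fintype Ω] (p : Ω → ℝ) : Prop :=
  (∀ ω, 0 ≤ p ω) ∧ ∑ ω, p ω = 1

/-- `P(X = x)`: the probability of the event `{X = x}` under the pmf `p`. -/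
def prob {Ω : Type} [Fintype Ω] (p : Ω → ℝ) {α : Type} (X : Ω → α) (x : α) : ℝ :=
  ∑ ω, if X ω = x then p ω else 0

/-- Shannon entropy of `X` in bits (logarithm base 2). -/
def entropy {Ω : Type} [Fintype Ω] (p : Ω → ℝ) {α : Type} [Fintype α] (X : Ω → α) : ℝ :=
  -∑ x, prob p X x * Real.logb 2 (prob p X x)

/-- Mutual information `I(X;Y) = H(X) + H(Y) - H((X,Y))` in bits. -/
def mutInfo {Ω : Type} [Fintype Ω] (p : Ω → ℝ) {α β : Type} [Fintype α] [Fintype β]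
    (X : Ω → α) (Y : Ω → β) : ℝ :=
  entropy p X + entropy p Y - entropy p fun ω => (X ω, Y ω)

/-- Conditional mutual information
`I(X;Y∣W) = H((X,W)) + H((Y,W)) - H((X,Y,W)) - H(W)` in bits. -/
def condMutInfo {Ω : Type} [Fintype Ω] (p : Ω → ℝ) {α β γ : Type}
    [Fintype α] [Fintype β] [Fintype γ] (X : Ω → α) (Y : Ω → β) (W : Ω → γ) : ℝ :=
  entropy p (fun ω => (X ω, W ω)) + entropy p (fun ω => (Y ω, W ω))
    - entropy p (fun ω => (X ω, Y ω, W ω)) - entropy p W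

/-- Arıkan's 2×2 polarization kernel over `F_2`. -/
def Gmat : Matrix (Fin 2) (Fin 2) (ZMod 2) := !![1, 0; 1, 1]

/-- The `m`-th Kronecker power `G^{⊗m}` of the kernel, an `2^m × 2^m` matrix over `F_2`. -/
def GPow : (m : ℕ) → Matrix (Fin (2 ^ m)) (Fin (2 ^ m)) (ZMod 2)
  | 0 => 1
  | m + 1 =>
    Matrix.reindex (finProdFinEquiv.trans (finCongr (by ring)))
      (finProdFinEquiv.trans (finCongr (by ring)))
      (Matrix.kroneckerMap (· * ·) Gmat (GPow m))

/-- The canonical joint pmf of `(V', Θ)`, where `V'` is uniform on `F_2^{2^m}` and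
`Θ` is an independent i.i.d. Bernoulli(ε) erasure pattern. -/
def becPMF (m : ℕ) (ε : ℝ) : (Fin (2 ^ m) → ZMod 2) × (Fin (2 ^ m) → Bool) → ℝ :=
  fun vθ => (1 / 2 : ℝ) ^ (2 ^ m) * ∏ j, (if vθ.2 j then ε else 1 - ε)

/-- The capacity of the `i`-th bit-channel of the polarization transform over BEC(ε):
`C_i = I(V'_i ; (Z', V'_{<i}))` where `V'` is uniform on `F_2^{2^m}` and `Z'` is the
BEC(ε) output of `V'⬝G^{⊗m}`. -/
def becBitCapacity (m : ℕ) (ε : ℝ) (i : Fin (2 ^ m)) : ℝ :=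
  mutInfo (becPMF m ε) (fun vθ => vθ.1 i)
    (fun vθ =>
      ((fun j => if vθ.2 j then (none : Option (ZMod 2))
          else some (Matrix.vecMul vθ.1 (GPow m) j)),
        fun j : Fin i.val => vθ.1 (Fin.castLE i.isLt.le j)))

namespace Stmt8

variable {Ω : Type} [Fintype Ω]

lemma prob_comp {α β : Type} [Fintype α] (p : Ω → ℝ) (X : Ω → α) (f : α → β) (y : β) :
    prob p (fun ω => f (X ω)) y = ∑ x, if f x = y then prob p X x else 0 := by
  unfold prob
  have h1 : ∀ x : α, (if f x = y then ∑ ω, (if X ω = x then p ω else 0) else 0)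
      = ∑ ω, (if f x = y then (if X ω = x then p ω else 0) else 0) := by
    intro x; split_ifs with h
    · rfl
    · simp
  simp only [h1]
  rw [Finset.sum_comm]
  refine Finset.sum_congr rfl fun ω _ => ?_
  rw [Finset.sum_eq_single (X ω)]
  · simp
  · intro x _ hx
    have : ¬ (X ω = x) := fun hc => hx hc.symm
    simp [this]
  · simp

lemma prob_eq_zero {α : Type} (p : Ω → ℝ) (X : Ω → α) (x : α) (h : ∀ ω, X ω ≠ x) :
    prob p X x = 0 := by
  unfold prob
  exact Finset.sum_eq_zero fun ω _ => by simp [h ω]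

lemma prob_comp_inj {α β : Type} [Fintype α] (p : Ω → ℝ) (X : Ω → α) {g : α → β}
    (hg : Function.Injective g) (x : α) :
    prob p (fun ω => g (X ω)) (g x) = prob p X x := by
  unfold prob
  refine Finset.sum_congr rfl fun ω _ => ?_
  simp [hg.eq_iff]

lemma entropy_congr {α : Type} [Fintype α] {Ω' : Type} [Fintype Ω'] (p : Ω → ℝ) (q : Ω' → ℝ)
    (X : Ω → α) (Y : Ω' → α) (h : ∀ x, prob p X x = prob q Y x) :
    entropy p X = entropy q Y := by
  unfold entropy
  congr 1
  exact Finset.sum_congr rfl fun x _ => by rw [h]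

lemma prob_transfer {Γ α : Type} [Fintype Γ] (p : Ω → ℝ) (J : Ω → Γ) (q : Γ → ℝ)
    (hq : ∀ γ, prob p J γ = q γ) (f : Γ → α) (x : α) :
    prob p (fun ω => f (J ω)) x = prob q f x := by
  rw [prob_comp p J f x]
  simp only [hq]
  rfl

lemma entropy_comp_injOn {α β : Type} [Fintype α] [Fintype β] (p : Ω → ℝ) (X : Ω → α)
    (σ : α → β) (S : Set α) (hS : ∀ x, prob p X x ≠ 0 → x ∈ S) (hinj : Set.InjOn σ S) :
    entropy p (fun ω => σ (X ω)) = entropy p X := by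
  classical
  set T : Finset α := Finset.univ.filter (fun x => prob p X x ≠ 0) with hT
  have hTmem : ∀ x, x ∈ T ↔ prob p X x ≠ 0 := by intro x; simp [hT]
  have key : ∀ y, prob p (fun ω => σ (X ω)) y = ∑ x ∈ T, if σ x = y then prob p X x else 0 := by
    intro y
    rw [prob_comp p X σ y]
    symm
    refine Finset.sum_subset (Finset.subset_univ T) fun x _ hx => ?_
    have : prob p X x = 0 := by
      by_contra hc; exact hx ((hTmem x).2 hc)
    simp [this]
  have hval : ∀ x ∈ T, prob p (fun ω => σ (X ω)) (σ x) = prob p X x := by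
    intro x hx
    rw [key]
    rw [Finset.sum_eq_single x]
    · simp
    · intro x' hx' hne
      have : σ x' ≠ σ x := fun hc =>
        hne (hinj (hS x' ((hTmem x').1 hx')) (hS x ((hTmem x).1 hx)) hc)
      simp [this]
    · intro hx'; exact absurd hx hx'
  unfold entropy
  congr 1
  have h1 : ∑ y, prob p (fun ω => σ (X ω)) y * Real.logb 2 (prob p (fun ω => σ (X ω)) y)
      = ∑ y ∈ T.image σ, prob p (fun ω => σ (X ω)) y * Real.logb 2 (prob p (fun ω => σ (X ω)) y) := by
    symm
    refine Finset.sum_subset (Finset.subset_univ _) fun y _ hy => ?_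
    have : prob p (fun ω => σ (X ω)) y = 0 := by
      rw [key]
      refine Finset.sum_eq_zero fun x hx => ?_
      have : σ x ≠ y := fun hc => hy (Finset.mem_image.2 ⟨x, hx, hc⟩)
      simp [this]
    simp [this]
  rw [h1]
  rw [Finset.sum_image (fun x hx x' hx' h =>
    hinj (hS x ((hTmem x).1 hx)) (hS x' ((hTmem x').1 hx')) h)]
  have h2 : ∑ x ∈ T, prob p (fun ω => σ (X ω)) (σ x) * Real.logb 2 (prob p (fun ω => σ (X ω)) (σ x))
      = ∑ x ∈ T, prob p X x * Real.logb 2 (prob p X x) := by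
    refine Finset.sum_congr rfl fun x hx => ?_
    rw [hval x hx]
  rw [h2]
  refine Finset.sum_subset (Finset.subset_univ T) fun x _ hx => ?_
  have : prob p X x = 0 := by by_contra hc; exact hx ((hTmem x).2 hc)
  simp [this]

end Stmt8

namespace Stmt8LA

open Submodule LinearMap

abbrev F2 := ZMod 2

lemma range_eq_span_single {κ W : Type} [Fintype κ] [DecidableEq κ] [AddCommGroup W]
    [Module F2 W] (M : (κ → F2) →ₗ[F2] W) :
    LinearMap.range M = Submodule.span F2 (Set.range fun a => M (Pi.single a 1)) := by
  apply le_antisymm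
  · rintro _ ⟨v, rfl⟩
    have hv : v = ∑ a, v a • Pi.single a (1 : F2) := by
      funext x
      simp [Finset.sum_apply, Pi.single_apply]
    rw [hv, map_sum]
    refine Submodule.sum_mem _ fun a _ => ?_
    rw [map_smul]
    exact Submodule.smul_mem _ _ (Submodule.subset_span ⟨a, rfl⟩)
  · rw [Submodule.span_le]
    rintro _ ⟨a, rfl⟩
    exact ⟨_, rfl⟩

/-- extension by zero of a function on a subtype -/
def ext0 {κ : Type} (P : κ → Prop) : ({x // P x} → F2) →ₗ[F2] (κ → F2) where
  toFun := fun v x => if h : P x then v ⟨x, h⟩ else 0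
  map_add' := by
    intro v w; funext x; by_cases h : P x <;> simp [h]
  map_smul' := by
    intro c v; funext x; by_cases h : P x <;> simp [h]

lemma ext0_apply {κ : Type} (P : κ → Prop) (v : {x // P x} → F2) (x : κ) :
    ext0 P v x = if h : P x then v ⟨x, h⟩ else 0 := rfl

lemma ext0_single {κ : Type} [DecidableEq κ] (P : κ → Prop) (a : {x // P x}) :
    ext0 P (Pi.single a 1) = Pi.single (a : κ) 1 := by
  funext x
  rw [ext0_apply]
  by_cases h : P x
  · simp only [h, dif_pos]
    rcases eq_or_ne x (a : κ) with he | he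
    · have h1 : (⟨x, h⟩ : {x // P x}) = a := Subtype.ext he
      rw [h1, he]
      simp
    · have : (⟨x, h⟩ : {x // P x}) ≠ a := fun hc => he (by rw [← hc])
      rw [Pi.single_eq_of_ne this, Pi.single_eq_of_ne he]
  · have : x ≠ (a : κ) := fun hc => h (hc ▸ a.2)
    simp only [h, dif_neg, not_false_iff]
    rw [Pi.single_eq_of_ne this]

lemma card_fiber {V W : Type} [Fintype V] [AddCommGroup V] [Module F2 V]
    [AddCommGroup W] [Module F2 W] [DecidableEq W] (L : V →ₗ[F2] W) (y : W) :
    (∑ v : V, if L v = y then (1 : ℝ) else 0)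
      = if y ∈ LinearMap.range L
          then ((2 : ℝ) ^ (Module.finrank F2 (LinearMap.ker L))) else 0 := by
  classical
  split_ifs with hy
  · obtain ⟨v₀, hv₀⟩ := hy
    have e : {v : V // L v = y} ≃ LinearMap.ker L :=
      { toFun := fun v => ⟨v.1 - v₀, by
          rw [LinearMap.mem_ker, map_sub, v.2, hv₀, sub_self]⟩
        invFun := fun w => ⟨w.1 + v₀, by
          rw [map_add, hv₀, LinearMap.mem_ker.1 w.2, zero_add]⟩
        left_inv := fun v => by ext; simp
        right_inv := fun w => by ext; simp }
    have h1 : (∑ v : V, if L v = y then (1 : ℝ) else 0)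
        = ((Finset.univ.filter (fun v : V => L v = y)).card : ℝ) := by
      rw [Finset.sum_boole]
    rw [h1, ← Fintype.card_subtype, Fintype.card_congr e,
      Module.card_eq_pow_finrank (K := F2) (V := LinearMap.ker L), ZMod.card]
    push_cast
    ring
  · refine Finset.sum_eq_zero fun v _ => ?_
    have : L v ≠ y := fun hc => hy ⟨v, hc⟩
    simp [this]

lemma finrank_span_insert {V : Type} [AddCommGroup V] [Module F2 V] [FiniteDimensional F2 V]
    (s : Set V) (x : V) (hx : x ∉ Submodule.span F2 s) :
    Module.finrank F2 (Submodule.span F2 (insert x s))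
      = Module.finrank F2 (Submodule.span F2 s) + 1 := by
  have hx0 : x ≠ 0 := fun hc => hx (hc ▸ Submodule.zero_mem _)
  have h1 : Module.finrank F2 (Submodule.span F2 ({x} : Set V)) = 1 :=
    finrank_span_singleton hx0
  have hinf : Submodule.span F2 ({x} : Set V) ⊓ Submodule.span F2 s = ⊥ := by
    rw [eq_bot_iff]
    rintro y ⟨hy1, hy2⟩
    obtain ⟨c, rfl⟩ := Submodule.mem_span_singleton.1 hy1
    have hc : c = 0 ∨ c = 1 := by
      have : ∀ c : F2, c = 0 ∨ c = 1 := by decide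
      exact this c
    rcases hc with rfl | rfl
    · simp
    · rw [one_smul] at hy2; exact absurd hy2 hx
  have h2 := Submodule.finrank_sup_add_finrank_inf_eq
    (Submodule.span F2 ({x} : Set V)) (Submodule.span F2 s)
  rw [hinf, h1, finrank_bot] at h2
  rw [Submodule.span_insert]
  omega

end Stmt8LA
namespace Stmt8LA

lemma restrict_ext0 {κ : Type} (P : κ → Prop) (v : κ → F2) (hv : ∀ x, ¬ P x → v x = 0) :
    ext0 P (fun a : {x // P x} => v a.1) = v := by
  funext x
  rw [ext0_apply]
  by_cases h : P x
  · simp [h]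
  · simp [h, hv x h]

lemma rank_pair {κ κ' : Type} {N : ℕ} [Fintype κ] [DecidableEq κ] [Fintype κ']
    (M : (κ → F2) →ₗ[F2] (Fin N → F2)) (ι : κ' → κ) (hι : Function.Injective ι) :
    Module.finrank F2 (LinearMap.range (M.prod (LinearMap.funLeft F2 F2 ι)))
      = Fintype.card κ' + Module.finrank F2 (Submodule.span F2
          ((fun a => M (Pi.single a 1)) '' {a | a ∉ Set.range ι})) := by
  classical
  set P : κ → Prop := fun a => a ∉ Set.range ι with hP
  set L := M.prod (LinearMap.funLeft F2 F2 ι) with hL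
  set M' := M.comp (ext0 P) with hM'
  have hLmem : ∀ v, v ∈ LinearMap.ker L ↔ (M v = 0 ∧ ∀ a, v (ι a) = 0) := by
    intro v
    rw [LinearMap.mem_ker, hL, LinearMap.prod_apply, Prod.mk_eq_zero]
    constructor
    · rintro ⟨hm, hf⟩
      exact ⟨hm, fun a => congrFun hf a⟩
    · rintro ⟨hm, hf⟩
      exact ⟨hm, funext hf⟩
  have hker : Module.finrank F2 (LinearMap.ker L) = Module.finrank F2 (LinearMap.ker M') := by
    refine LinearEquiv.finrank_eq ?_
    refine
      { toFun := fun v => ⟨fun a => v.1 a.1, ?_⟩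
        map_add' := fun v w => rfl
        map_smul' := fun c v => rfl
        invFun := fun u => ⟨ext0 P u.1, ?_⟩
        left_inv := ?_
        right_inv := ?_ }
    · obtain ⟨h1, h2⟩ := (hLmem v.1).1 v.2
      have hres : ext0 P (fun a : {x // P x} => v.1 a.1) = v.1 :=
        restrict_ext0 P v.1 (by
          intro x hx
          rcases not_not.1 hx with ⟨a, rfl⟩
          exact h2 a)
      show M' (fun a : {x // P x} => v.1 a.1) = 0
      rw [hM', LinearMap.comp_apply, hres, h1]
    · have h1 : M' u.1 = 0 := u.2
      refine (hLmem _).2 ⟨h1, fun a => ?_⟩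
      rw [ext0_apply]
      have : ¬ P (ι a) := by simp [hP]
      simp [this]
    · rintro ⟨v, hv⟩
      obtain ⟨h1, h2⟩ := (hLmem v).1 hv
      refine Subtype.ext ?_
      show ext0 P (fun a : {x // P x} => v a.1) = v
      exact restrict_ext0 P v (by
        intro x hx
        rcases not_not.1 hx with ⟨a, rfl⟩
        exact h2 a)
    · rintro ⟨u, hu⟩
      refine Subtype.ext ?_
      show (fun a : {x // P x} => ext0 P u a.1) = u
      funext a
      rw [ext0_apply, dif_pos a.2]
  have h1 := LinearMap.finrank_range_add_finrank_ker L
  have h2 := LinearMap.finrank_range_add_finrank_ker M'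
  rw [Module.finrank_pi] at h1 h2
  have h3 : Fintype.card κ = Fintype.card κ' + Fintype.card {x // P x} := by
    have hce := Fintype.card_congr (Equiv.sumCompl (fun x : κ => x ∈ Set.range ι))
    rw [Fintype.card_sum] at hce
    have h2' : Fintype.card {x : κ // x ∈ Set.range ι} = Fintype.card κ' :=
      Fintype.card_range (⟨ι, hι⟩ : κ' ↪ κ)
    have h3' : Fintype.card {x : κ // ¬ x ∈ Set.range ι} = Fintype.card {x // P x} :=
      Fintype.card_congr (Equiv.subtypeEquivRight (fun x => Iff.rfl))
    omega
  have hone : ∀ a : {x // P x}, M' (Pi.single a 1) = M (Pi.single (a : κ) 1) := fun a => by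
    rw [hM', LinearMap.comp_apply, ext0_single]
  have hsets : (Set.range fun a : {x // P x} => M' (Pi.single a 1))
      = (fun a => M (Pi.single a 1)) '' {a | a ∉ Set.range ι} := by
    ext y
    simp only [Set.mem_range, Set.mem_image, Set.mem_setOf_eq]
    constructor
    · rintro ⟨a, rfl⟩
      exact ⟨↑a, a.2, (hone a).symm⟩
    · rintro ⟨a, ha, rfl⟩
      exact ⟨⟨a, ha⟩, hone ⟨a, ha⟩⟩
  have h4 : Module.finrank F2 (LinearMap.range M')
      = Module.finrank F2 (Submodule.span F2
          ((fun a => M (Pi.single a 1)) '' {a | a ∉ Set.range ι})) := by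
    rw [range_eq_span_single M', hsets]
  rw [hP]
  omega

end Stmt8LA
namespace Stmt8LA

lemma two_pow_half_pow (r : ℕ) : ((2:ℝ)^r) * ((1/2:ℝ)^r) = 1 := by
  rw [← mul_pow]
  norm_num

lemma logb_half_pow (r : ℕ) : Real.logb 2 ((1/2:ℝ)^r) = -(r:ℝ) := by
  rw [Real.logb_pow, one_div, Real.logb_inv, Real.logb_self_eq_one (by norm_num)]
  ring

lemma big {κ κ' T β : Type} {N : ℕ} [Fintype κ] [DecidableEq κ] [Fintype κ'] [Fintype T]
    [Fintype β]
    (w : T → ℝ)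
    (M : T → ((κ → F2) →ₗ[F2] (Fin N → F2)))
    (ι : κ' → κ) (hι : Function.Injective ι)
    (σ : T × ((Fin N → F2) × (κ' → F2)) → β)
    (hσ : Set.InjOn σ {x | ∃ v, M x.1 v = x.2.1 ∧ (fun a => v (ι a)) = x.2.2}) :
    entropy (fun vt : (κ → F2) × T => (1/2:ℝ)^(Fintype.card κ) * w vt.2)
        (fun vt => σ (vt.2, (M vt.2 vt.1, fun a => vt.1 (ι a))))
      = (-∑ t, w t * Real.logb 2 (w t))
        + ∑ t, w t * ((Fintype.card κ' : ℝ)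
            + (Module.finrank F2 (Submodule.span F2
                ((fun a => M t (Pi.single a 1)) '' {a | a ∉ Set.range ι})) : ℝ)) := by
  classical
  set p : (κ → F2) × T → ℝ := fun vt => (1/2:ℝ)^(Fintype.card κ) * w vt.2 with hp
  set L : T → ((κ → F2) →ₗ[F2] ((Fin N → F2) × (κ' → F2))) :=
    fun t => (M t).prod (LinearMap.funLeft F2 F2 ι) with hLdef
  have hXeq : (fun vt : (κ → F2) × T => σ (vt.2, (M vt.2 vt.1, fun a => vt.1 (ι a))))
      = fun vt => σ (vt.2, L vt.2 vt.1) := rfl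
  rw [hXeq]
  set X : (κ → F2) × T → T × ((Fin N → F2) × (κ' → F2)) := fun vt => (vt.2, L vt.2 vt.1)
    with hXdef
  have hstep : entropy p (fun vt => σ (X vt)) = entropy p X := by
    refine Stmt8.entropy_comp_injOn p X σ _ ?_ hσ
    intro x hx
    have hex : ∃ ω, X ω = x := by
      by_contra hc
      push_neg at hc
      exact hx (Stmt8.prob_eq_zero p X x hc)
    obtain ⟨⟨v, t⟩, rfl⟩ := hex
    exact ⟨v, rfl, rfl⟩
  rw [hstep]
  -- compute prob
  have hprob : ∀ t₀ (y : (Fin N → F2) × (κ' → F2)), prob p X (t₀, y)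
      = if y ∈ LinearMap.range (L t₀)
          then w t₀ * (1/2:ℝ) ^ (Module.finrank F2 (LinearMap.range (L t₀))) else 0 := by
    intro t₀ y
    have honestep : prob p X (t₀, y)
        = ∑ v : κ → F2, (if L t₀ v = y then (1/2:ℝ)^(Fintype.card κ) * w t₀ else 0) := by
      unfold prob
      rw [Fintype.sum_prod_type]
      refine Finset.sum_congr rfl fun v _ => ?_
      rw [Finset.sum_eq_single t₀]
      · by_cases h : L t₀ v = y
        · rw [if_pos h, if_pos (show X (v, t₀) = (t₀, y) from congrArg (Prod.mk t₀) h)]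
        · rw [if_neg h, if_neg (show ¬ X (v, t₀) = (t₀, y) from
            fun hc => h (congrArg Prod.snd hc))]
      · intro t' _ ht
        exact if_neg (fun hc => ht (congrArg Prod.fst hc))
      · intro h
        exact absurd (Finset.mem_univ t₀) h
    rw [honestep]
    have hres : (∑ v : κ → F2, if L t₀ v = y then (1/2:ℝ)^(Fintype.card κ) * w t₀ else 0)
        = ((1/2:ℝ)^(Fintype.card κ) * w t₀) * (∑ v : κ → F2, if L t₀ v = y then (1:ℝ) else 0) := by
      rw [Finset.mul_sum]
      refine Finset.sum_congr rfl fun v _ => ?_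
      split_ifs <;> ring
    rw [hres, card_fiber (L t₀) y]
    have hrn := LinearMap.finrank_range_add_finrank_ker (L t₀)
    rw [Module.finrank_pi] at hrn
    split_ifs with h
    · rw [← hrn, pow_add]
      have := two_pow_half_pow (Module.finrank F2 (LinearMap.ker (L t₀)))
      field_simp
      linear_combination (w t₀) * this
    · ring
  -- compute entropy
  unfold entropy
  rw [Fintype.sum_prod_type]
  have hterm : ∀ t : T,
      (∑ y : (Fin N → F2) × (κ' → F2),
        prob p X (t, y) * Real.logb 2 (prob p X (t, y)))
      = w t * Real.logb 2 (w t)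
        - w t * (Module.finrank F2 (LinearMap.range (L t)) : ℝ) := by
    intro t
    by_cases hw : w t = 0
    · have hz : ∀ y : (Fin N → F2) × (κ' → F2), prob p X (t, y) = 0 := by
        intro y
        rw [hprob]
        split_ifs <;> simp [hw]
      simp [hz, hw]
    · set r : ℕ := Module.finrank F2 (LinearMap.range (L t)) with hr
      set a : ℝ := w t * (1/2:ℝ)^r with ha
      have ha0 : a ≠ 0 := by
        rw [ha]
        exact mul_ne_zero hw (by positivity)
      have hcard : Fintype.card {y : (Fin N → F2) × (κ' → F2) // y ∈ LinearMap.range (L t)}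
          = 2 ^ r := by
        have hc := Module.card_eq_pow_finrank (K := F2) (V := LinearMap.range (L t))
        rw [ZMod.card] at hc
        convert hc using 2
      have hfc : (Finset.univ.filter
          (fun y : (Fin N → F2) × (κ' → F2) => y ∈ LinearMap.range (L t))).card
          = Fintype.card {y : (Fin N → F2) × (κ' → F2) // y ∈ LinearMap.range (L t)} :=
        (Fintype.card_of_subtype _ (fun x => by simp)).symm
      have hcount : ((Finset.univ.filter
          (fun y : (Fin N → F2) × (κ' → F2) => y ∈ LinearMap.range (L t))).card : ℝ)
          = (2:ℝ)^r := by
        rw [hfc, hcard]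
        push_cast
        rfl
      have h1 : (∑ y : (Fin N → F2) × (κ' → F2),
          prob p X (t, y) * Real.logb 2 (prob p X (t, y)))
          = ∑ y : (Fin N → F2) × (κ' → F2),
              (if y ∈ LinearMap.range (L t) then a * Real.logb 2 a else 0) := by
        refine Finset.sum_congr rfl fun y _ => ?_
        rw [hprob]
        split_ifs with h
        · rfl
        · simp
      rw [h1, ← Finset.sum_filter, Finset.sum_const, nsmul_eq_mul, hcount]
      have hlog : Real.logb 2 a = Real.logb 2 (w t) - (r : ℝ) := by
        rw [ha, Real.logb_mul hw (by positivity), logb_half_pow]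
        ring
      rw [hlog, ha]
      have h2 := two_pow_half_pow r
      linear_combination (w t * (Real.logb 2 (w t) - (r:ℝ))) * h2
  have hsum : ∀ t : T, (∑ y : (Fin N → F2) × (κ' → F2),
        prob p X (t, y) * Real.logb 2 (prob p X (t, y)))
      = w t * Real.logb 2 (w t)
        - w t * ((Fintype.card κ' : ℝ) + (Module.finrank F2 (Submodule.span F2
            ((fun a => M t (Pi.single a 1)) '' {a | a ∉ Set.range ι})) : ℝ)) := by
    intro t
    rw [hterm t, hLdef]
    rw [rank_pair (M t) ι hι]
    push_cast
    ring
  simp only [hsum]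
  rw [Finset.sum_sub_distrib]
  ring

end Stmt8LA
namespace Stmt8LA

variable {V : Type} [AddCommGroup V] [Module F2 V] [FiniteDimensional F2 V]

def rkT {ι : Type} (f : ι → V) (T : Finset ι) : ℕ :=
  Module.finrank F2 (Submodule.span F2 (f '' ↑T))

lemma rk_mono {ι : Type} (f : ι → V) {T T' : Finset ι} (h : T ⊆ T') : rkT f T ≤ rkT f T' :=
  Submodule.finrank_mono (Submodule.span_mono (Set.image_mono (f := _) (by exact_mod_cast h)))

lemma rk_le_card {ι : Type} [DecidableEq V] (f : ι → V) (T : Finset ι) : rkT f T ≤ T.card := by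
  have h1 : rkT f T ≤ (T.image f).card := by
    unfold rkT
    rw [← Finset.coe_image]
    exact finrank_span_finset_le_card (T.image f)
  exact h1.trans Finset.card_image_le

lemma rk_empty {ι : Type} (f : ι → V) : rkT f (∅ : Finset ι) = 0 := by
  unfold rkT
  simp

lemma rk_insert_mem {ι : Type} [DecidableEq ι] (f : ι → V) (T : Finset ι) (i : ι)
    (h : f i ∈ Submodule.span F2 (f '' ↑T)) : rkT f (insert i T) = rkT f T := by
  unfold rkT
  rw [Finset.coe_insert, Set.image_insert_eq, Submodule.span_insert_eq_span h]

lemma rk_insert_not_mem {ι : Type} [DecidableEq ι] (f : ι → V) (T : Finset ι) (i : ι)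
    (h : f i ∉ Submodule.span F2 (f '' ↑T)) : rkT f (insert i T) = rkT f T + 1 := by
  unfold rkT
  rw [Finset.coe_insert, Set.image_insert_eq]
  exact finrank_span_insert _ _ h

lemma rk_telescope {n : ℕ} (f : Fin n → V) (T : Finset (Fin n)) :
    (∑ i ∈ T, ((rkT f (T ∩ Finset.Ici i) : ℝ) - (rkT f (T ∩ Finset.Ioi i) : ℝ)))
      = rkT f T := by
  induction T using Finset.strongInduction with
  | _ T ih =>
    rcases T.eq_empty_or_nonempty with rfl | hT
    · simp [rk_empty]
    · set i0 := T.min' hT with hi0def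
      have hi0 : i0 ∈ T := T.min'_mem hT
      have h1 : T ∩ Finset.Ici i0 = T := by
        ext x
        simp only [Finset.mem_inter, Finset.mem_Ici, and_iff_left_iff_imp]
        intro hx
        exact T.min'_le x hx
      have h2 : T ∩ Finset.Ioi i0 = T.erase i0 := by
        ext x
        simp only [Finset.mem_inter, Finset.mem_Ioi, Finset.mem_erase]
        constructor
        · rintro ⟨hx, hlt⟩
          exact ⟨ne_of_gt hlt, hx⟩
        · rintro ⟨hne, hx⟩
          exact ⟨hx, lt_of_le_of_ne (T.min'_le x hx) (Ne.symm hne)⟩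
      rw [← Finset.sum_erase_add T _ hi0, h1, h2]
      have hkey : ∀ i ∈ T.erase i0,
          ((rkT f (T ∩ Finset.Ici i) : ℝ) - (rkT f (T ∩ Finset.Ioi i) : ℝ))
            = ((rkT f ((T.erase i0) ∩ Finset.Ici i) : ℝ)
                - (rkT f ((T.erase i0) ∩ Finset.Ioi i) : ℝ)) := by
        intro i hi
        have hii : i0 < i := by
          rcases Finset.mem_erase.1 hi with ⟨hne, hiT⟩
          exact lt_of_le_of_ne (T.min'_le i hiT) (Ne.symm hne)
        have e1 : T ∩ Finset.Ici i = (T.erase i0) ∩ Finset.Ici i := by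
          ext x
          simp only [Finset.mem_inter, Finset.mem_Ici, Finset.mem_erase]
          constructor
          · rintro ⟨hx, hle⟩
            exact ⟨⟨fun hc => absurd (hc ▸ hle) (not_le.2 hii), hx⟩, hle⟩
          · rintro ⟨⟨_, hx⟩, hle⟩
            exact ⟨hx, hle⟩
        have e2 : T ∩ Finset.Ioi i = (T.erase i0) ∩ Finset.Ioi i := by
          ext x
          simp only [Finset.mem_inter, Finset.mem_Ioi, Finset.mem_erase]
          constructor
          · rintro ⟨hx, hlt⟩
            exact ⟨⟨fun hc => absurd (hc ▸ hlt) (not_lt.2 (le_of_lt hii)), hx⟩, hlt⟩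
          · rintro ⟨⟨_, hx⟩, hlt⟩
            exact ⟨hx, hlt⟩
        rw [e1, e2]
      rw [Finset.sum_congr rfl hkey, ih (T.erase i0) (Finset.erase_ssubset hi0)]
      have : T = insert i0 (T.erase i0) := (Finset.insert_erase hi0).symm
      by_cases hmem : f i0 ∈ Submodule.span F2 (f '' ↑(T.erase i0))
      · rw [this, rk_insert_mem f _ i0 hmem]
        ring
      · rw [this, rk_insert_not_mem f _ i0 hmem]
        push_cast
        ring

lemma sum_delta_le {n : ℕ} (f : Fin n → V) (K : Finset (Fin n)) :
    (∑ i ∈ K, ((rkT f (Finset.Ici i) : ℝ) - (rkT f (Finset.Ioi i) : ℝ)))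
      ≤ (rkT f K : ℝ) := by
  rw [← rk_telescope f K]
  refine Finset.sum_le_sum fun i hi => ?_
  have hIci : Finset.Ici i = insert i (Finset.Ioi i) := (Finset.Ioi_insert i).symm
  have hKIci : K ∩ Finset.Ici i = insert i (K ∩ Finset.Ioi i) := by
    ext x
    simp only [Finset.mem_inter, Finset.mem_Ici, Finset.mem_insert, Finset.mem_Ioi]
    constructor
    · rintro ⟨hxK, hxi⟩
      rcases eq_or_lt_of_le hxi with heq | hlt
      · exact Or.inl heq.symm
      · exact Or.inr ⟨hxK, hlt⟩
    · rintro (rfl | ⟨hxK, hlt⟩)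
      · exact ⟨hi, le_refl _⟩
      · exact ⟨hxK, le_of_lt hlt⟩
  by_cases hmem : f i ∈ Submodule.span F2 (f '' ↑(Finset.Ioi i))
  · have h1 : rkT f (Finset.Ici i) = rkT f (Finset.Ioi i) := by
      rw [hIci, rk_insert_mem f _ i hmem]
    have h2 : rkT f (K ∩ Finset.Ioi i) ≤ rkT f (K ∩ Finset.Ici i) := by
      rw [hKIci]
      exact rk_mono f (Finset.subset_insert _ _)
    rw [h1]
    have h2' : (rkT f (K ∩ Finset.Ioi i) : ℝ) ≤ (rkT f (K ∩ Finset.Ici i) : ℝ) := by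
      exact_mod_cast h2
    linarith
  · have hmem2 : f i ∉ Submodule.span F2 (f '' ↑(K ∩ Finset.Ioi i)) := fun hc =>
      hmem (Submodule.span_mono
        (Set.image_mono (f := f) (by exact_mod_cast Finset.inter_subset_right)) hc)
    rw [hKIci, hIci, rk_insert_not_mem f _ i hmem, rk_insert_not_mem f _ i hmem2]
    push_cast
    linarith

end Stmt8LA
namespace Stmt8LA

open Finset

def wf (m : ℕ) (ε : ℝ) (θ : Fin (2^m) → Bool) : ℝ := ∏ j, (if θ j then ε else 1 - ε)

lemma wf_sum (m : ℕ) (ε : ℝ) : ∑ θ : Fin (2^m) → Bool, wf m ε θ = 1 := by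
  unfold wf
  calc ∑ θ : Fin (2^m) → Bool, ∏ j, (if θ j then ε else 1 - ε)
      = ∑ θ ∈ Fintype.piFinset (fun _ : Fin (2^m) => (Finset.univ : Finset Bool)),
          ∏ j, (if θ j then ε else 1 - ε) := by rw [Fintype.piFinset_univ]
    _ = ∏ j : Fin (2^m), ∑ b : Bool, (if b then ε else 1 - ε) :=
        (Finset.prod_univ_sum (fun _ : Fin (2^m) => (Finset.univ : Finset Bool)) (fun _ b => if b then ε else 1 - ε)).symm
    _ = 1 := by
        refine Finset.prod_eq_one fun j _ => ?_
        simp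

lemma wf_nonneg (m : ℕ) {ε : ℝ} (hε : ε ∈ Set.Icc (0:ℝ) 1) (θ : Fin (2^m) → Bool) :
    0 ≤ wf m ε θ := by
  refine Finset.prod_nonneg fun j _ => ?_
  split_ifs
  · exact hε.1
  · linarith [hε.2]

def mask {N : ℕ} (θ : Fin N → Bool) : (Fin N → F2) →ₗ[F2] (Fin N → F2) where
  toFun := fun y j => if θ j then 0 else y j
  map_add' := by
    intro y z; funext j; by_cases h : θ j <;> simp [h]
  map_smul' := by
    intro c y; funext j; by_cases h : θ j <;> simp [h]

lemma mask_apply {N : ℕ} (θ : Fin N → Bool) (y : Fin N → F2) (j : Fin N) :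
    mask θ y j = if θ j then 0 else y j := rfl

def recode {N : ℕ} (θ : Fin N → Bool) (y : Fin N → F2) : Fin N → Option F2 :=
  fun j => if θ j then none else some (y j)

lemma recode_inj {N : ℕ} {θ θ' : Fin N → Bool} {y y' : Fin N → F2}
    (h : recode θ y = recode θ' y')
    (hy : ∀ j, θ j = true → y j = 0) (hy' : ∀ j, θ' j = true → y' j = 0) :
    θ = θ' ∧ y = y' := by
  have hθ : θ = θ' := by
    funext j
    have hj := congrFun h j
    unfold recode at hj
    cases hθj : θ j <;> cases hθj' : θ' j <;> rw [hθj, hθj'] at hj <;> simp at hj <;> rfl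
  subst hθ
  refine ⟨rfl, ?_⟩
  funext j
  have hj := congrFun h j
  unfold recode at hj
  cases hθj : θ j
  · rw [hθj] at hj
    simpa using hj
  · rw [hy j hθj, hy' j hθj]

lemma masked_of_mask {N : ℕ} (θ : Fin N → Bool) (v : Fin N → F2) {y : Fin N → F2}
    (h : mask θ v = y) : ∀ j, θ j = true → y j = 0 := by
  intro j hj
  rw [← h, mask_apply, hj]
  simp

def maskrow (m : ℕ) (θ : Fin (2^m) → Bool) : Fin (2^m) → (Fin (2^m) → F2) :=
  fun a => mask θ (GPow m a)

def Mbec (m : ℕ) (θ : Fin (2^m) → Bool) : (Fin (2^m) → F2) →ₗ[F2] (Fin (2^m) → F2) :=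
  (mask θ).comp (Matrix.vecMulLinear (GPow m))

lemma Mbec_apply (m : ℕ) (θ : Fin (2^m) → Bool) (v : Fin (2^m) → F2) :
    Mbec m θ v = mask θ (Matrix.vecMul v (GPow m)) := rfl

lemma Mbec_single (m : ℕ) (θ : Fin (2^m) → Bool) (a : Fin (2^m)) :
    Mbec m θ (Pi.single a 1) = maskrow m θ a := by
  rw [Mbec_apply, Matrix.single_one_vecMul]
  rfl

/-- entropy when all probabilities are equal -/
lemma entropy_const_prob {Ω α : Type} [Fintype Ω] [Fintype α] (p : Ω → ℝ) (X : Ω → α)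
    (c : ℝ) (h : ∀ x, prob p X x = c) :
    entropy p X = -((Fintype.card α : ℝ) * (c * Real.logb 2 c)) := by
  unfold entropy
  rw [Finset.sum_congr rfl (fun x _ => by rw [h x])]
  rw [Finset.sum_const, nsmul_eq_mul]
  rfl

lemma becPMF_eq (m : ℕ) (ε : ℝ) :
    becPMF m ε = fun vt : (Fin (2^m) → F2) × (Fin (2^m) → Bool) =>
      (1/2:ℝ)^(Fintype.card (Fin (2^m))) * wf m ε vt.2 := by
  funext vt
  simp [becPMF, wf, Fintype.card_fin]

lemma H_bit (m : ℕ) (ε : ℝ) (i : Fin (2^m)) :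
    entropy (becPMF m ε) (fun vθ => vθ.1 i) = 1 := by
  have hproj : Function.Surjective (LinearMap.proj (R := F2) (φ := fun _ : Fin (2^m) => F2) i) := by
    intro x
    refine ⟨Pi.single i x, ?_⟩
    simp
  have hrange : LinearMap.range (LinearMap.proj (R := F2) (φ := fun _ : Fin (2^m) => F2) i) = ⊤ :=
    LinearMap.range_eq_top.2 hproj
  have hrk : Module.finrank F2
      (LinearMap.range (LinearMap.proj (R := F2) (φ := fun _ : Fin (2^m) => F2) i)) = 1 := by
    rw [hrange, finrank_top, Module.finrank_self]
  have hrn := LinearMap.finrank_range_add_finrank_ker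
    (LinearMap.proj (R := F2) (φ := fun _ : Fin (2^m) => F2) i)
  rw [Module.finrank_pi, Fintype.card_fin, hrk] at hrn
  set k := Module.finrank F2
    (LinearMap.ker (LinearMap.proj (R := F2) (φ := fun _ : Fin (2^m) => F2) i)) with hk
  have hprob : ∀ x : F2, prob (becPMF m ε) (fun vθ => vθ.1 i) x = 1/2 := by
    intro x
    unfold prob
    rw [becPMF_eq, Fintype.sum_prod_type]
    dsimp only
    trans (∑ v : Fin (2^m) → ZMod 2, if v i = x then (1/2:ℝ)^(Fintype.card (Fin (2^m))) else 0)
    · refine Finset.sum_congr rfl fun v _ => ?_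
      by_cases h : v i = x
      · simp only [if_pos h]
        rw [← Finset.mul_sum, wf_sum, mul_one]
      · simp only [if_neg h]
        simp
    have hres : (∑ v : Fin (2^m) → F2, if v i = x then (1/2:ℝ)^(Fintype.card (Fin (2^m))) else 0)
        = (1/2:ℝ)^(Fintype.card (Fin (2^m)))
            * (∑ v : Fin (2^m) → F2,
                if (LinearMap.proj (R := F2) (φ := fun _ : Fin (2^m) => F2) i) v = x
                  then (1:ℝ) else 0) := by
      rw [Finset.mul_sum]
      refine Finset.sum_congr rfl fun v _ => ?_
      have hp : (LinearMap.proj (R := F2) (φ := fun _ : Fin (2^m) => F2) i) v = v i := rfl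
      rw [hp]
      split_ifs <;> ring
    rw [hres, card_fiber, ← hk, if_pos (by rw [hrange]; trivial), Fintype.card_fin]
    have h2m : 2^m = 1 + k := hrn.symm
    rw [h2m, pow_add, pow_one]
    nlinarith [two_pow_half_pow k]
  rw [entropy_const_prob _ _ (1/2) hprob]
  have hcard : (Fintype.card F2 : ℝ) = 2 := by
    rw [ZMod.card]
    norm_num
  have hlog : Real.logb 2 (1/2 : ℝ) = -1 := by
    have := logb_half_pow 1
    simpa using this
  rw [hcard, hlog]
  norm_num

end Stmt8LA
namespace Stmt8LA

def ιlt (m : ℕ) (i : Fin (2^m)) : Fin i.val → Fin (2^m) := Fin.castLE i.isLt.le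

def ιle (m : ℕ) (i : Fin (2^m)) : Fin (i.val+1) → Fin (2^m) := Fin.castLE i.isLt

lemma ιlt_inj (m : ℕ) (i : Fin (2^m)) : Function.Injective (ιlt m i) :=
  Fin.castLE_injective _

lemma ιle_inj (m : ℕ) (i : Fin (2^m)) : Function.Injective (ιle m i) :=
  Fin.castLE_injective _

lemma compl_lt (m : ℕ) (i : Fin (2^m)) :
    {a : Fin (2^m) | a ∉ Set.range (ιlt m i)} = ↑(Finset.Ici i) := by
  ext a
  simp only [Set.mem_setOf_eq, Set.mem_range, Finset.coe_Ici, Set.mem_Ici]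
  constructor
  · intro h
    by_contra hc
    rw [not_le] at hc
    have hlt : a.val < i.val := hc
    exact h ⟨⟨a.val, hlt⟩, Fin.ext rfl⟩
  · rintro hle ⟨j, rfl⟩
    have : (ιlt m i j).val < i.val := j.isLt
    have h2 : i.val ≤ (ιlt m i j).val := hle
    omega

lemma compl_le (m : ℕ) (i : Fin (2^m)) :
    {a : Fin (2^m) | a ∉ Set.range (ιle m i)} = ↑(Finset.Ioi i) := by
  ext a
  simp only [Set.mem_setOf_eq, Set.mem_range, Finset.coe_Ioi, Set.mem_Ioi]
  constructor
  · intro h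
    by_contra hc
    rw [not_lt] at hc
    have hlt : a.val < i.val + 1 := Nat.lt_succ_of_le hc
    exact h ⟨⟨a.val, hlt⟩, Fin.ext rfl⟩
  · intro hlt
    rintro ⟨j, rfl⟩
    have h1 : (ιle m i j).val < i.val + 1 := j.isLt
    have h2 : i.val < (ιle m i j).val := hlt
    omega

def σ2 (m : ℕ) (i : Fin (2^m)) :
    (Fin (2^m) → Bool) × ((Fin (2^m) → F2) × (Fin i.val → F2))
      → (Fin (2^m) → Option F2) × (Fin i.val → F2) :=
  fun x => (recode x.1 x.2.1, x.2.2)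

def σ3 (m : ℕ) (i : Fin (2^m)) :
    (Fin (2^m) → Bool) × ((Fin (2^m) → F2) × (Fin (i.val+1) → F2))
      → F2 × ((Fin (2^m) → Option F2) × (Fin i.val → F2)) :=
  fun x => (x.2.2 (Fin.last i.val), (recode x.1 x.2.1, fun j => x.2.2 j.castSucc))

lemma injOn2 (m : ℕ) (i : Fin (2^m)) :
    Set.InjOn (σ2 m i)
      {x | ∃ v, Mbec m x.1 v = x.2.1 ∧ (fun a => v (ιlt m i a)) = x.2.2} := by
  rintro ⟨θ1, y1, u1⟩ hx1 ⟨θ2, y2, u2⟩ hx2 heq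
  obtain ⟨v1, hv1, -⟩ := hx1
  obtain ⟨v2, hv2, -⟩ := hx2
  have h1 : recode θ1 y1 = recode θ2 y2 := congrArg Prod.fst heq
  have h2 : u1 = u2 := congrArg Prod.snd heq
  obtain ⟨hθ, hy⟩ := recode_inj h1 (masked_of_mask θ1 _ hv1) (masked_of_mask θ2 _ hv2)
  rw [hθ, hy, h2]

lemma injOn3 (m : ℕ) (i : Fin (2^m)) :
    Set.InjOn (σ3 m i)
      {x | ∃ v, Mbec m x.1 v = x.2.1 ∧ (fun a => v (ιle m i a)) = x.2.2} := by
  rintro ⟨θ1, y1, u1⟩ hx1 ⟨θ2, y2, u2⟩ hx2 heq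
  obtain ⟨v1, hv1, -⟩ := hx1
  obtain ⟨v2, hv2, -⟩ := hx2
  have h1 : recode θ1 y1 = recode θ2 y2 := congrArg (fun z => z.2.1) heq
  have hlast : u1 (Fin.last i.val) = u2 (Fin.last i.val) := congrArg Prod.fst heq
  have hcs : (fun j : Fin i.val => u1 j.castSucc) = fun j => u2 j.castSucc :=
    congrArg (fun z => z.2.2) heq
  obtain ⟨hθ, hy⟩ := recode_inj h1 (masked_of_mask θ1 _ hv1) (masked_of_mask θ2 _ hv2)
  have hu : u1 = u2 := by
    funext a
    induction a using Fin.lastCases with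
    | last => exact hlast
    | cast j => exact congrFun hcs j
  rw [hθ, hy, hu]

lemma cap_eq (m : ℕ) (ε : ℝ) (i : Fin (2^m)) :
    becBitCapacity m ε i
      = ∑ θ : Fin (2^m) → Bool, wf m ε θ *
          ((rkT (maskrow m θ) (Finset.Ici i) : ℝ) - (rkT (maskrow m θ) (Finset.Ioi i) : ℝ)) := by
  have hMrow : ∀ θ : Fin (2^m) → Bool,
      (fun a => Mbec m θ (Pi.single a 1)) = maskrow m θ := fun θ => funext (Mbec_single m θ)
  have hspanIci : ∀ θ : Fin (2^m) → Bool,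
      Module.finrank F2 (Submodule.span F2
        ((fun a => Mbec m θ (Pi.single a 1)) '' {a | a ∉ Set.range (ιlt m i)}))
      = rkT (maskrow m θ) (Finset.Ici i) := by
    intro θ
    unfold rkT
    rw [hMrow θ, compl_lt]
  have hspanIoi : ∀ θ : Fin (2^m) → Bool,
      Module.finrank F2 (Submodule.span F2
        ((fun a => Mbec m θ (Pi.single a 1)) '' {a | a ∉ Set.range (ιle m i)}))
      = rkT (maskrow m θ) (Finset.Ioi i) := by
    intro θ
    unfold rkT
    rw [hMrow θ, compl_le]
  have H2 : entropy (becPMF m ε)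
      (fun vθ : (Fin (2^m) → F2) × (Fin (2^m) → Bool) =>
        ((fun j => if vθ.2 j then (none : Option (ZMod 2))
            else some (Matrix.vecMul vθ.1 (GPow m) j)),
          fun j : Fin i.val => vθ.1 (Fin.castLE i.isLt.le j)))
      = (-∑ θ, wf m ε θ * Real.logb 2 (wf m ε θ))
        + ∑ θ, wf m ε θ * ((i.val : ℝ) + (rkT (maskrow m θ) (Finset.Ici i) : ℝ)) := by
    rw [becPMF_eq]
    have hfun : (fun vθ : (Fin (2^m) → F2) × (Fin (2^m) → Bool) =>
        ((fun j => if vθ.2 j then (none : Option (ZMod 2))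
            else some (Matrix.vecMul vθ.1 (GPow m) j)),
          fun j : Fin i.val => vθ.1 (Fin.castLE i.isLt.le j)))
        = fun vt => σ2 m i (vt.2, (Mbec m vt.2 vt.1, fun a => vt.1 (ιlt m i a))) := by
      funext vt
      unfold σ2 recode
      dsimp only
      congr 1
      funext j
      rw [Mbec_apply, mask_apply]
      by_cases h : vt.2 j <;> simp [h]
    rw [hfun, big (wf m ε) (Mbec m) (ιlt m i) (ιlt_inj m i) (σ2 m i) (injOn2 m i)]
    congr 1
    refine Finset.sum_congr rfl fun θ _ => ?_
    rw [hspanIci θ, Fintype.card_fin]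
  have H3 : entropy (becPMF m ε)
      (fun vθ : (Fin (2^m) → F2) × (Fin (2^m) → Bool) =>
        (vθ.1 i,
          ((fun j => if vθ.2 j then (none : Option (ZMod 2))
              else some (Matrix.vecMul vθ.1 (GPow m) j)),
            fun j : Fin i.val => vθ.1 (Fin.castLE i.isLt.le j))))
      = (-∑ θ, wf m ε θ * Real.logb 2 (wf m ε θ))
        + ∑ θ, wf m ε θ * (((i.val : ℕ) + 1 : ℝ) + (rkT (maskrow m θ) (Finset.Ioi i) : ℝ)) := by
    rw [becPMF_eq]
    have hfun : (fun vθ : (Fin (2^m) → F2) × (Fin (2^m) → Bool) =>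
        (vθ.1 i,
          ((fun j => if vθ.2 j then (none : Option (ZMod 2))
              else some (Matrix.vecMul vθ.1 (GPow m) j)),
            fun j : Fin i.val => vθ.1 (Fin.castLE i.isLt.le j))))
        = fun vt => σ3 m i (vt.2, (Mbec m vt.2 vt.1, fun a => vt.1 (ιle m i a))) := by
      funext vt
      unfold σ3
      dsimp only
      have hz : (fun j => if vt.2 j = true then (none : Option (ZMod 2))
            else some (Matrix.vecMul vt.1 (GPow m) j)) = recode vt.2 (Mbec m vt.2 vt.1) := by
        funext j
        unfold recode
        rw [Mbec_apply, mask_apply]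
        by_cases h : vt.2 j <;> simp [h]
      rw [hz]
      exact rfl
    rw [hfun, big (wf m ε) (Mbec m) (ιle m i) (ιle_inj m i) (σ3 m i) (injOn3 m i)]
    congr 1
    refine Finset.sum_congr rfl fun θ _ => ?_
    rw [hspanIoi θ, Fintype.card_fin]
    push_cast
    ring
  unfold becBitCapacity mutInfo
  rw [H_bit, H2, H3]
  have hw1 := wf_sum m ε
  have e1 : ∑ θ : Fin (2^m) → Bool, wf m ε θ
        * ((i.val : ℝ) + (rkT (maskrow m θ) (Finset.Ici i) : ℝ))
      = (i.val : ℝ) * (∑ θ : Fin (2^m) → Bool, wf m ε θ)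
        + ∑ θ : Fin (2^m) → Bool, wf m ε θ * (rkT (maskrow m θ) (Finset.Ici i) : ℝ) := by
    rw [Finset.mul_sum, ← Finset.sum_add_distrib]
    refine Finset.sum_congr rfl fun θ _ => ?_
    ring
  have e2 : ∑ θ : Fin (2^m) → Bool, wf m ε θ
        * (((i.val : ℕ) + 1 : ℝ) + (rkT (maskrow m θ) (Finset.Ioi i) : ℝ))
      = ((i.val : ℝ) + 1) * (∑ θ : Fin (2^m) → Bool, wf m ε θ)
        + ∑ θ : Fin (2^m) → Bool, wf m ε θ * (rkT (maskrow m θ) (Finset.Ioi i) : ℝ) := by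
    rw [Finset.mul_sum, ← Finset.sum_add_distrib]
    refine Finset.sum_congr rfl fun θ _ => ?_
    push_cast
    ring
  have e3 : ∑ θ : Fin (2^m) → Bool, wf m ε θ *
        ((rkT (maskrow m θ) (Finset.Ici i) : ℝ) - (rkT (maskrow m θ) (Finset.Ioi i) : ℝ))
      = (∑ θ : Fin (2^m) → Bool, wf m ε θ * (rkT (maskrow m θ) (Finset.Ici i) : ℝ))
        - ∑ θ : Fin (2^m) → Bool, wf m ε θ * (rkT (maskrow m θ) (Finset.Ioi i) : ℝ) := by
    rw [← Finset.sum_sub_distrib]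
    refine Finset.sum_congr rfl fun θ _ => ?_
    ring
  rw [e1, e2, e3, hw1]
  ring

end Stmt8LA
namespace Stmt8LA

section LHSsec

variable {m : ℕ} (A R : Finset (Fin (2^m)))

def combineUE : (({i // i ∈ A} → F2) × ({i // i ∈ R} → F2)) → ({x // x ∈ A ∪ R} → F2) :=
  fun ue a => if h : (a : Fin (2^m)) ∈ A then ue.1 ⟨a, h⟩ else ue.2 ⟨a, by
    rcases Finset.mem_union.1 a.2 with h' | h'
    · exact absurd h' h
    · exact h'⟩

def splitUE : ({x // x ∈ A ∪ R} → F2) → (({i // i ∈ A} → F2) × ({i // i ∈ R} → F2)) :=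
  fun v => (fun i => v ⟨i, Finset.mem_union_left _ i.2⟩,
            fun i => v ⟨i, Finset.mem_union_right _ i.2⟩)

lemma combine_split (v : {x // x ∈ A ∪ R} → F2) : combineUE A R (splitUE A R v) = v := by
  funext a
  unfold combineUE splitUE
  by_cases h : (a : Fin (2^m)) ∈ A
  · rw [dif_pos h]
  · rw [dif_neg h]

lemma split_combine (hAR : Disjoint A R) (ue : ({i // i ∈ A} → F2) × ({i // i ∈ R} → F2)) :
    splitUE A R (combineUE A R ue) = ue := by
  unfold splitUE combineUE
  refine Prod.ext ?_ ?_
  · funext i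
    dsimp only
    rw [dif_pos i.2]
  · funext i
    dsimp only
    rw [dif_neg (Finset.disjoint_right.1 hAR i.2)]

lemma combine_inj (hAR : Disjoint A R) : Function.Injective (combineUE A R) :=
  fun a b h => by rw [← split_combine A R hAR a, ← split_combine A R hAR b, h]

def extAR : ({x // x ∈ A ∪ R} → F2) →ₗ[F2] (Fin (2^m) → F2) :=
  ext0 (fun x => x ∈ A ∪ R)

def MA (θ : Fin (2^m) → Bool) : ({x // x ∈ A ∪ R} → F2) →ₗ[F2] (Fin (2^m) → F2) :=
  (Mbec m θ).comp (extAR A R)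

lemma MA_single (θ : Fin (2^m) → Bool) (a : {x // x ∈ A ∪ R}) :
    MA A R θ (Pi.single a 1) = maskrow m θ ↑a := by
  unfold MA
  rw [LinearMap.comp_apply]
  unfold extAR
  rw [ext0_single]
  exact Mbec_single m θ ↑a

def ιA : {i // i ∈ A} → {x // x ∈ A ∪ R} :=
  fun i => ⟨↑i, Finset.mem_union_left _ i.2⟩

lemma ιA_inj : Function.Injective (ιA A R) := by
  intro a b h
  have h' : ((ιA A R a) : Fin (2^m)) = ((ιA A R b) : Fin (2^m)) := congrArg Subtype.val h
  exact Subtype.ext h'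

def ιZ : Fin 0 → {x // x ∈ A ∪ R} := Fin.elim0

lemma ιZ_inj : Function.Injective (ιZ A R) := fun a => a.elim0

lemma mem_range_ιA (a : {x // x ∈ A ∪ R}) : a ∈ Set.range (ιA A R) ↔ (a : Fin (2^m)) ∈ A := by
  constructor
  · rintro ⟨i, rfl⟩
    exact i.2
  · intro h
    exact ⟨⟨↑a, h⟩, Subtype.ext rfl⟩

lemma hset1 (θ : Fin (2^m) → Bool) :
    (fun a : {x // x ∈ A ∪ R} => MA A R θ (Pi.single a 1)) '' {a | a ∉ Set.range (ιZ A R)}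
      = maskrow m θ '' ↑(A ∪ R) := by
  ext y
  simp only [Set.mem_image, Set.mem_setOf_eq, Finset.mem_coe]
  constructor
  · rintro ⟨a, -, rfl⟩
    exact ⟨↑a, a.2, (MA_single A R θ a).symm⟩
  · rintro ⟨x, hx, rfl⟩
    refine ⟨⟨x, hx⟩, ?_, MA_single A R θ ⟨x, hx⟩⟩
    rintro ⟨j, -⟩
    exact j.elim0

lemma hset2 (hAR : Disjoint A R) (θ : Fin (2^m) → Bool) :
    (fun a : {x // x ∈ A ∪ R} => MA A R θ (Pi.single a 1)) '' {a | a ∉ Set.range (ιA A R)}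
      = maskrow m θ '' ↑R := by
  ext y
  simp only [Set.mem_image, Set.mem_setOf_eq, Finset.mem_coe]
  constructor
  · rintro ⟨a, ha, rfl⟩
    have hnA : (a : Fin (2^m)) ∉ A := fun hc => ha ((mem_range_ιA A R a).2 hc)
    have hR : (a : Fin (2^m)) ∈ R := by
      rcases Finset.mem_union.1 a.2 with h' | h'
      · exact absurd h' hnA
      · exact h'
    exact ⟨↑a, hR, (MA_single A R θ a).symm⟩
  · rintro ⟨x, hx, rfl⟩
    refine ⟨⟨x, Finset.mem_union_right _ hx⟩, ?_, MA_single A R θ _⟩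
    intro hc
    have : x ∈ A := (mem_range_ιA A R _).1 hc
    exact Finset.disjoint_right.1 hAR hx this

def σZf (_A _R : Finset (Fin (2^m))) : (Fin (2^m) → Bool) × ((Fin (2^m) → F2) × (Fin 0 → F2))
    → (Fin (2^m) → Option F2) := fun x => recode x.1 x.2.1

def σUf (_R : Finset (Fin (2^m))) : (Fin (2^m) → Bool) × ((Fin (2^m) → F2) × ({i // i ∈ A} → F2))
    → ({i // i ∈ A} → F2) × (Fin (2^m) → Option F2) :=
  fun x => (x.2.2, recode x.1 x.2.1)

lemma MA_masked (θ : Fin (2^m) → Bool) (v : {x // x ∈ A ∪ R} → F2) {y : Fin (2^m) → F2}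
    (h : MA A R θ v = y) : ∀ j, θ j = true → y j = 0 :=
  masked_of_mask θ _ h

lemma injOnZ : Set.InjOn (σZf A R)
    {x | ∃ v, MA A R x.1 v = x.2.1 ∧ (fun a => v (ιZ A R a)) = x.2.2} := by
  rintro ⟨θ1, y1, u1⟩ hx1 ⟨θ2, y2, u2⟩ hx2 heq
  obtain ⟨v1, hv1, -⟩ := hx1
  obtain ⟨v2, hv2, -⟩ := hx2
  have h1 : recode θ1 y1 = recode θ2 y2 := heq
  have hm1 : MA A R θ1 v1 = y1 := hv1
  have hm2 : MA A R θ2 v2 = y2 := hv2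
  obtain ⟨hθ, hy⟩ := recode_inj h1 (MA_masked A R θ1 v1 hm1) (MA_masked A R θ2 v2 hm2)
  have hu : u1 = u2 := by
    funext a
    exact a.elim0
  rw [hθ, hy, hu]

lemma injOnU : Set.InjOn (σUf A R)
    {x | ∃ v, MA A R x.1 v = x.2.1 ∧ (fun a => v (ιA A R a)) = x.2.2} := by
  rintro ⟨θ1, y1, u1⟩ hx1 ⟨θ2, y2, u2⟩ hx2 heq
  obtain ⟨v1, hv1, -⟩ := hx1
  obtain ⟨v2, hv2, -⟩ := hx2
  have h1 : recode θ1 y1 = recode θ2 y2 := congrArg Prod.snd heq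
  have h2 : u1 = u2 := congrArg Prod.fst heq
  have hm1 : MA A R θ1 v1 = y1 := hv1
  have hm2 : MA A R θ2 v2 = y2 := hv2
  obtain ⟨hθ, hy⟩ := recode_inj h1 (MA_masked A R θ1 v1 hm1) (MA_masked A R θ2 v2 hm2)
  rw [hθ, hy, h2]

end LHSsec

end Stmt8LA
open Stmt8LA in
/-- **Proposition 3** instantiated for a wiretap BEC: in the polar-secrecy-code-over-BEC
setup, the MIS leakage satisfies `I(U ; Z) ≥ max (∑_{i∈A} C_i + ∑_{j∈R} C_j − r) 0`. -/
theorem stmt8 {Ω : Type} [Fintype Ω] (p : Ω → ℝ) (hp : IsPMF p)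
    (m : ℕ) (ε : ℝ) (hε : ε ∈ Set.Icc (0 : ℝ) 1)
    (A R B : Finset (Fin (2 ^ m)))
    (hAR : Disjoint A R) (hAB : Disjoint A B) (hRB : Disjoint R B)
    (hcover : A ∪ R ∪ B = Finset.univ)
    (U : Ω → ({i // i ∈ A} → ZMod 2)) (E : Ω → ({i // i ∈ R} → ZMod 2))
    (Θ : Ω → (Fin (2 ^ m) → Bool))
    (hUE : ∀ u e, prob p (fun ω => (U ω, E ω)) (u, e) = (1 / 2 : ℝ) ^ (A.card + R.card))
    (hΘ : ∀ u e θ, prob p (fun ω => ((U ω, E ω), Θ ω)) ((u, e), θ)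
      = prob p (fun ω => (U ω, E ω)) (u, e) * ∏ j, (if θ j then ε else 1 - ε))
    (V : Ω → (Fin (2 ^ m) → ZMod 2))
    (hV : ∀ ω i, V ω i
      = if h : i ∈ A then U ω ⟨i, h⟩ else if h : i ∈ R then E ω ⟨i, h⟩ else 0)
    (Z : Ω → (Fin (2 ^ m) → Option (ZMod 2)))
    (hZ : ∀ ω j, Z ω j = if Θ ω j then none
      else some (Matrix.vecMul (V ω) (GPow m) j)) :
    mutInfo p U Z
      ≥ max (∑ i ∈ A, becBitCapacity m ε i + ∑ j ∈ R, becBitCapacity m ε j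
          - (R.card : ℝ)) 0 := by
  classical
  set q : ({x // x ∈ A ∪ R} → F2) × (Fin (2^m) → Bool) → ℝ :=
    fun vt => (1/2:ℝ)^(Fintype.card {x // x ∈ A ∪ R}) * wf m ε vt.2 with hqdef
  set J : Ω → (({x // x ∈ A ∪ R} → F2) × (Fin (2^m) → Bool)) :=
    fun ω => (combineUE A R (U ω, E ω), Θ ω) with hJdef
  -- transfer of the joint pmf
  have hJ : ∀ γ, prob p J γ = q γ := by
    rintro ⟨v, θ⟩
    have hg : Function.Injective
        (fun x : (({i // i ∈ A} → F2) × ({i // i ∈ R} → F2)) × (Fin (2^m) → Bool) =>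
          (combineUE A R x.1, x.2)) := by
      intro x y h
      have h1 := congrArg Prod.fst h
      have h2 := congrArg Prod.snd h
      exact Prod.ext (combine_inj A R hAR h1) h2
    have h0 : combineUE A R (((splitUE A R v).1, (splitUE A R v).2)) = v :=
      combine_split A R v
    have hv : (v, θ)
        = (fun x : (({i // i ∈ A} → F2) × ({i // i ∈ R} → F2)) × (Fin (2^m) → Bool) =>
            (combineUE A R x.1, x.2)) (((splitUE A R v).1, (splitUE A R v).2), θ) := by
      dsimp only
      rw [h0]
    have hJg : J = fun ω =>
        (fun x : (({i // i ∈ A} → F2) × ({i // i ∈ R} → F2)) × (Fin (2^m) → Bool) =>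
          (combineUE A R x.1, x.2)) ((U ω, E ω), Θ ω) := rfl
    rw [hv, hJg, Stmt8.prob_comp_inj p (fun ω => ((U ω, E ω), Θ ω)) hg
      (((splitUE A R v).1, (splitUE A R v).2), θ)]
    rw [hΘ, hUE]
    have hcard : Fintype.card {x // x ∈ A ∪ R} = A.card + R.card := by
      rw [Fintype.card_coe, Finset.card_union_of_disjoint hAR]
    rw [hqdef]
    dsimp only
    rw [hcard]
    rfl
  -- V in terms of the model
  have hVeq : ∀ ω, V ω = extAR A R (combineUE A R (U ω, E ω)) := by
    intro ω
    funext i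
    rw [hV ω i]
    unfold extAR
    rw [ext0_apply]
    by_cases hA : i ∈ A
    · rw [dif_pos hA, dif_pos (Finset.mem_union_left R hA)]
      show U ω ⟨i, hA⟩ = combineUE A R (U ω, E ω) ⟨i, Finset.mem_union_left R hA⟩
      unfold combineUE
      rw [dif_pos hA]
    · by_cases hR : i ∈ R
      · rw [dif_neg hA, dif_pos hR, dif_pos (Finset.mem_union_right A hR)]
        show E ω ⟨i, hR⟩ = combineUE A R (U ω, E ω) ⟨i, Finset.mem_union_right A hR⟩
        unfold combineUE
        rw [dif_neg hA]
      · rw [dif_neg hA, dif_neg hR, dif_neg (by simp [Finset.mem_union, hA, hR])]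
  -- Z in terms of the model
  have hZfun : Z = fun ω => σZf A R
      ((J ω).2, (MA A R (J ω).2 (J ω).1, fun a => (J ω).1 (ιZ A R a))) := by
    funext ω j
    rw [hZ ω j]
    show (if Θ ω j then none else some (Matrix.vecMul (V ω) (GPow m) j))
      = recode (Θ ω) (MA A R (Θ ω) (combineUE A R (U ω, E ω))) j
    unfold recode
    by_cases h : Θ ω j
    · simp [h]
    · have hMAv : MA A R (Θ ω) (combineUE A R (U ω, E ω)) j
          = Matrix.vecMul (V ω) (GPow m) j := by
        have h1 : MA A R (Θ ω) (combineUE A R (U ω, E ω))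
            = mask (Θ ω) (Matrix.vecMul (extAR A R (combineUE A R (U ω, E ω))) (GPow m)) := rfl
        rw [h1, mask_apply, if_neg (by simp [h]), ← hVeq ω]
      simp [h, hMAv]
  -- entropy of Z
  have hEZ : entropy p Z
      = (-∑ θ, wf m ε θ * Real.logb 2 (wf m ε θ))
        + ∑ θ, wf m ε θ * (rkT (maskrow m θ) (A ∪ R) : ℝ) := by
    rw [hZfun]
    have hstep : entropy p (fun ω => σZf A R
          ((J ω).2, (MA A R (J ω).2 (J ω).1, fun a => (J ω).1 (ιZ A R a))))
        = entropy q (fun γ => σZf A R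
            (γ.2, (MA A R γ.2 γ.1, fun a => γ.1 (ιZ A R a)))) :=
      Stmt8.entropy_congr _ _ _ _ (fun x => Stmt8.prob_transfer p J q hJ
        (fun γ => σZf A R (γ.2, (MA A R γ.2 γ.1, fun a => γ.1 (ιZ A R a)))) x)
    rw [hstep, hqdef, big (wf m ε) (MA A R) (ιZ A R) (ιZ_inj A R) (σZf A R) (injOnZ A R)]
    congr 1
    refine Finset.sum_congr rfl fun θ _ => ?_
    have hr : Module.finrank F2 (Submodule.span F2
          ((fun a => MA A R θ (Pi.single a 1)) '' {a | a ∉ Set.range (ιZ A R)}))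
        = rkT (maskrow m θ) (A ∪ R) := by
      unfold rkT
      rw [hset1 A R θ]
    rw [hr]
    simp
  -- entropy of (U, Z)
  have hEUZ : entropy p (fun ω => (U ω, Z ω))
      = (-∑ θ, wf m ε θ * Real.logb 2 (wf m ε θ))
        + ∑ θ, wf m ε θ * ((A.card : ℝ) + (rkT (maskrow m θ) R : ℝ)) := by
    have hUZfun : (fun ω => (U ω, Z ω)) = fun ω => σUf A R
        ((J ω).2, (MA A R (J ω).2 (J ω).1, fun a => (J ω).1 (ιA A R a))) := by
      funext ω
      refine Prod.ext ?_ ?_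
      · show U ω = fun a => (J ω).1 (ιA A R a)
        funext a
        show U ω a = combineUE A R (U ω, E ω) (ιA A R a)
        unfold combineUE ιA
        rw [dif_pos a.2]
      · show Z ω = recode ((J ω).2) (MA A R ((J ω).2) ((J ω).1))
        exact congrFun hZfun ω
    rw [hUZfun]
    have hstep : entropy p (fun ω => σUf A R
          ((J ω).2, (MA A R (J ω).2 (J ω).1, fun a => (J ω).1 (ιA A R a))))
        = entropy q (fun γ => σUf A R
            (γ.2, (MA A R γ.2 γ.1, fun a => γ.1 (ιA A R a)))) :=
      Stmt8.entropy_congr _ _ _ _ (fun x => Stmt8.prob_transfer p J q hJ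
        (fun γ => σUf A R (γ.2, (MA A R γ.2 γ.1, fun a => γ.1 (ιA A R a)))) x)
    rw [hstep, hqdef, big (wf m ε) (MA A R) (ιA A R) (ιA_inj A R) (σUf A R) (injOnU A R)]
    congr 1
    refine Finset.sum_congr rfl fun θ _ => ?_
    have hr : Module.finrank F2 (Submodule.span F2
          ((fun a => MA A R θ (Pi.single a 1)) '' {a | a ∉ Set.range (ιA A R)}))
        = rkT (maskrow m θ) R := by
      unfold rkT
      rw [hset2 A R hAR θ]
    rw [hr, Fintype.card_coe]
  -- entropy of U
  have hprobU : ∀ u : {i // i ∈ A} → F2, prob p U u = (1/2:ℝ)^(A.card) := by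
    intro u
    have h0 : prob p U u = prob p (fun ω => ((U ω, E ω)).1) u := rfl
    rw [h0, Stmt8.prob_comp p (fun ω => (U ω, E ω)) Prod.fst u, Fintype.sum_prod_type]
    dsimp only
    trans (∑ u' : {i // i ∈ A} → F2, if u' = u
        then ((Fintype.card ({i // i ∈ R} → F2) : ℝ) * (1/2:ℝ)^(A.card + R.card)) else 0)
    · refine Finset.sum_congr rfl fun u' _ => ?_
      by_cases h : u' = u
      · simp only [if_pos h]
        rw [Finset.sum_congr rfl (fun e _ => hUE u' e), Finset.sum_const, nsmul_eq_mul,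
          Finset.card_univ]
      · simp only [if_neg h]
        simp
    · rw [Finset.sum_ite_eq' Finset.univ u]
      simp only [Finset.mem_univ, if_true]
      have hcR : (Fintype.card ({i // i ∈ R} → F2) : ℝ) = 2^(R.card) := by
        rw [Fintype.card_fun, ZMod.card, Fintype.card_coe]
        push_cast
        ring
      rw [hcR, pow_add]
      linear_combination ((1/2:ℝ)^A.card) * two_pow_half_pow (R.card)
  have HU : entropy p U = (A.card : ℝ) := by
    rw [entropy_const_prob p U _ hprobU]
    have hcA : (Fintype.card ({i // i ∈ A} → F2) : ℝ) = 2^(A.card) := by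
      rw [Fintype.card_fun, ZMod.card, Fintype.card_coe]
      push_cast
      ring
    rw [hcA, logb_half_pow]
    linear_combination ((A.card : ℝ)) * two_pow_half_pow (A.card)
  -- mutual information formula
  have hMI : mutInfo p U Z = ∑ θ : Fin (2^m) → Bool, wf m ε θ *
      ((rkT (maskrow m θ) (A ∪ R) : ℝ) - (rkT (maskrow m θ) R : ℝ)) := by
    unfold mutInfo
    rw [HU, hEZ, hEUZ]
    have hw1 := wf_sum m ε
    have e2 : ∑ θ : Fin (2^m) → Bool, wf m ε θ * ((A.card : ℝ) + (rkT (maskrow m θ) R : ℝ))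
        = (A.card : ℝ) * (∑ θ : Fin (2^m) → Bool, wf m ε θ)
          + ∑ θ : Fin (2^m) → Bool, wf m ε θ * (rkT (maskrow m θ) R : ℝ) := by
      rw [Finset.mul_sum, ← Finset.sum_add_distrib]
      refine Finset.sum_congr rfl fun θ _ => ?_
      ring
    have e3 : ∑ θ : Fin (2^m) → Bool, wf m ε θ *
          ((rkT (maskrow m θ) (A ∪ R) : ℝ) - (rkT (maskrow m θ) R : ℝ))
        = (∑ θ : Fin (2^m) → Bool, wf m ε θ * (rkT (maskrow m θ) (A ∪ R) : ℝ))
          - ∑ θ : Fin (2^m) → Bool, wf m ε θ * (rkT (maskrow m θ) R : ℝ) := by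
      rw [← Finset.sum_sub_distrib]
      refine Finset.sum_congr rfl fun θ _ => ?_
      ring
    rw [e2, e3, hw1]
    ring
  -- conclusion
  rw [ge_iff_le, max_le_iff, hMI]
  constructor
  · rw [← Finset.sum_union hAR, Finset.sum_congr rfl (fun i _ => cap_eq m ε i),
      Finset.sum_comm]
    rw [show (R.card : ℝ)
        = ∑ θ : Fin (2^m) → Bool, wf m ε θ * (R.card : ℝ) by
      rw [← Finset.sum_mul, wf_sum, one_mul]]
    rw [← Finset.sum_sub_distrib]
    refine Finset.sum_le_sum fun θ _ => ?_
    rw [← Finset.mul_sum]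
    have hw0 := wf_nonneg m hε θ
    have h1 := sum_delta_le (maskrow m θ) (A ∪ R)
    have h2 : (rkT (maskrow m θ) R : ℝ) ≤ (R.card : ℝ) := by
      exact_mod_cast rk_le_card (maskrow m θ) R
    have key : (∑ i ∈ A ∪ R, ((rkT (maskrow m θ) (Finset.Ici i) : ℝ)
          - (rkT (maskrow m θ) (Finset.Ioi i) : ℝ))) - (R.card : ℝ)
        ≤ (rkT (maskrow m θ) (A ∪ R) : ℝ) - (rkT (maskrow m θ) R : ℝ) := by
      linarith
    nlinarith [mul_le_mul_of_nonneg_left key hw0]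
  · refine Finset.sum_nonneg fun θ _ => ?_
    have hw0 := wf_nonneg m hε θ
    have hmono : rkT (maskrow m θ) R ≤ rkT (maskrow m θ) (A ∪ R) :=
      rk_mono (maskrow m θ) Finset.subset_union_right
    have : (0:ℝ) ≤ (rkT (maskrow m θ) (A ∪ R) : ℝ) - (rkT (maskrow m θ) R : ℝ) := by
      have := (Nat.cast_le (α := ℝ)).2 hmono
      linarith
    nlinarith
end
end

section
/- (Inequality (19) of the paper: C + Z ≥ 1 for binary-input memoryless symmetric channels.) Let Y be a finite set and let p_0, p_1 be probability mass functions on Y for which there exists an involution π: Y → Y (π ∘ π = id) with p_1(y) = p_0(π(y)) for all y ∈ Y. Let X be uniform on {0,1} and let Y be a random variable with conditional law P(Y = y | X = b) = p_b(y). Then I(X; Y) + Σ_{y∈Y} √(p_0(y) p_1(y)) ≥ 1, where I is mutual information in bits (logarithm base 2) and the sum is the Bhattacharyya parameter Z of the channel. -/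
open scoped Classical

noncomputable section

section AuxStmt11
open Real Set

lemma log_five_ge : (8:ℝ)/5 ≤ Real.log 5 := by
  rw [Real.le_log_iff_exp_le (by norm_num)]
  have h1 : Real.exp (8/5) ^ (5:ℕ) = Real.exp 8 := by
    rw [← Real.exp_nat_mul]; norm_num
  have h2 : Real.exp 8 ≤ 3125 := by
    have h3 : Real.exp 8 = Real.exp 1 ^ (8:ℕ) := by rw [← Real.exp_nat_mul]; norm_num
    rw [h3]
    calc Real.exp 1 ^ (8:ℕ) ≤ 2.7182818286 ^ (8:ℕ) := by
          apply pow_le_pow_left₀ (Real.exp_pos 1).le Real.exp_one_lt_d9.le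
      _ ≤ 3125 := by norm_num
  have h4 : Real.exp (8/5) ^ (5:ℕ) ≤ 5 ^ (5:ℕ) := by rw [h1]; norm_num; linarith
  exact le_of_pow_le_pow_left₀ (by norm_num) (by norm_num) h4

def M (s : ℝ) : ℝ := s * Real.log (1 + s^2) - 2*(s * Real.log s)
def M1 (s : ℝ) : ℝ := Real.log (1 + s^2) - 2*Real.log s - 2/(1 + s^2)
def M2 (s : ℝ) : ℝ := 2*(s^2 - 1)/(s*(1 + s^2)^2)
def D (s : ℝ) : ℝ := 2*Real.log 2*s - (1 + s^2)*Real.log (1 + s^2) + 2*(s*(s * Real.log s))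
def D1 (s : ℝ) : ℝ := 2*Real.log 2 - 2 * M s

lemma one_add_sq_pos (s : ℝ) : (0:ℝ) < 1 + s^2 := by positivity

lemma hasDerivAt_M {s : ℝ} (hs : 0 < s) : HasDerivAt M (M1 s) s := by
  have h1 : HasDerivAt (fun s : ℝ => 1 + s^2) (2*s) s := by
    simpa using ((hasDerivAt_pow 2 s).const_add 1)
  have h2 : HasDerivAt (fun s : ℝ => Real.log (1 + s^2)) (2*s/(1+s^2)) s :=
    (h1.log (one_add_sq_pos s).ne')
  have h3 : HasDerivAt (fun s : ℝ => s * Real.log (1 + s^2))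
      (1 * Real.log (1+s^2) + s * (2*s/(1+s^2))) s :=
    (hasDerivAt_id s).mul h2
  have h4 : HasDerivAt (fun s : ℝ => s * Real.log s)
      (1 * Real.log s + s * s⁻¹) s :=
    (hasDerivAt_id s).mul (Real.hasDerivAt_log hs.ne')
  have := h3.sub (h4.const_mul 2)
  refine HasDerivAt.congr_deriv this ?_
  unfold M1
  field_simp
  ring

lemma hasDerivAt_M1 {s : ℝ} (hs : 0 < s) : HasDerivAt M1 (M2 s) s := by
  have h1 : HasDerivAt (fun s : ℝ => 1 + s^2) (2*s) s := by
    simpa using ((hasDerivAt_pow 2 s).const_add 1)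
  have h2 : HasDerivAt (fun s : ℝ => Real.log (1 + s^2)) (2*s/(1+s^2)) s :=
    (h1.log (one_add_sq_pos s).ne')
  have h3 : HasDerivAt (fun s : ℝ => 2/(1+s^2)) ((0*(1+s^2) - 2*(2*s))/(1+s^2)^2) s :=
    (hasDerivAt_const s 2).div h1 (one_add_sq_pos s).ne'
  have h4 := (h2.sub ((Real.hasDerivAt_log hs.ne').const_mul 2)).sub h3
  refine HasDerivAt.congr_deriv h4 ?_
  unfold M2
  have hne : (1:ℝ) + s^2 ≠ 0 := (one_add_sq_pos s).ne'
  field_simp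
  ring

lemma hasDerivAt_D {s : ℝ} (hs : 0 < s) : HasDerivAt D (D1 s) s := by
  have h1 : HasDerivAt (fun s : ℝ => 1 + s^2) (2*s) s := by
    simpa using ((hasDerivAt_pow 2 s).const_add 1)
  have h2 : HasDerivAt (fun s : ℝ => Real.log (1 + s^2)) (2*s/(1+s^2)) s :=
    (h1.log (one_add_sq_pos s).ne')
  have h3 : HasDerivAt (fun s : ℝ => (1+s^2) * Real.log (1+s^2))
      (2*s * Real.log (1+s^2) + (1+s^2) * (2*s/(1+s^2))) s := h1.mul h2
  have h4 : HasDerivAt (fun s : ℝ => s * Real.log s)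
      (1 * Real.log s + s * s⁻¹) s :=
    (hasDerivAt_id s).mul (Real.hasDerivAt_log hs.ne')
  have h5 : HasDerivAt (fun s : ℝ => s * (s * Real.log s))
      (1 * (s * Real.log s) + s * (1 * Real.log s + s * s⁻¹)) s :=
    (hasDerivAt_id s).mul h4
  have h6 : HasDerivAt (fun s : ℝ => 2*Real.log 2*s) (2*Real.log 2) s := by
    simpa using (hasDerivAt_id s).const_mul (2*Real.log 2)
  have := (h6.sub h3).add (h5.const_mul 2)
  refine HasDerivAt.congr_deriv this ?_
  unfold D1 M
  have hne : (1:ℝ) + s^2 ≠ 0 := (one_add_sq_pos s).ne'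
  field_simp
  ring

lemma contM : Continuous M := by
  unfold M
  exact (continuous_id.mul ((continuous_const.add (continuous_pow 2)).log
    (fun s => (one_add_sq_pos s).ne'))).sub (continuous_const.mul Real.continuous_mul_log)

lemma contD : Continuous D := by
  unfold D
  exact ((continuous_const.mul continuous_id).sub
    ((continuous_const.add (continuous_pow 2)).mul
      ((continuous_const.add (continuous_pow 2)).log (fun s => (one_add_sq_pos s).ne')))).add
    (continuous_const.mul (continuous_id.mul Real.continuous_mul_log))

lemma contM1 : ContinuousOn M1 (Ioc (0:ℝ) 1) := by
  unfold M1
  apply ContinuousOn.sub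
  apply ContinuousOn.sub
  · exact ((continuous_const.add (continuous_pow 2)).log
      (fun s => (one_add_sq_pos s).ne')).continuousOn
  · exact (Real.continuousOn_log.comp continuous_id.continuousOn
      (fun x hx => by simp; exact ne_of_gt hx.1)).const_smul 2 |>.congr (by
        intro x hx; simp [Function.comp])
  · exact (continuous_const.div (continuous_const.add (continuous_pow 2))
      (fun s => (one_add_sq_pos s).ne')).continuousOn

lemma M1_anti : AntitoneOn M1 (Ioc (0:ℝ) 1) := by
  apply antitoneOn_of_deriv_nonpos (convex_Ioc 0 1) contM1
  · intro x hx
    rw [interior_Ioc] at hx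
    exact (hasDerivAt_M1 hx.1).differentiableAt.differentiableWithinAt
  · intro x hx
    rw [interior_Ioc] at hx
    rw [(hasDerivAt_M1 hx.1).deriv]
    unfold M2
    apply div_nonpos_of_nonpos_of_nonneg
    · nlinarith [hx.2, hx.1]
    · exact (mul_pos hx.1 (pow_pos (one_add_sq_pos x) 2)).le

lemma M1_half : M1 (1/2) = Real.log 5 - 8/5 := by
  unfold M1
  have h1 : (1:ℝ) + (1/2)^2 = 5/4 := by norm_num
  rw [h1, Real.log_div (by norm_num) (by norm_num),
    show (1:ℝ)/2 = 2⁻¹ by norm_num, Real.log_inv,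
    show (4:ℝ) = 2^2 by norm_num, Real.log_pow]
  push_cast
  ring

lemma M1_nonneg : ∀ s ∈ Ioc (0:ℝ) (1/2), 0 ≤ M1 s := by
  intro s hs
  have h := M1_anti (show s ∈ Ioc (0:ℝ) 1 from ⟨hs.1, le_trans hs.2 (by norm_num)⟩)
    (show (1/2:ℝ) ∈ Ioc (0:ℝ) 1 by norm_num) hs.2
  rw [M1_half] at h
  linarith [log_five_ge]

lemma M_mono : MonotoneOn M (Icc (0:ℝ) (1/2)) := by
  apply monotoneOn_of_deriv_nonneg (convex_Icc 0 (1/2)) contM.continuousOn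
  · intro x hx
    rw [interior_Icc] at hx
    exact (hasDerivAt_M hx.1).differentiableAt.differentiableWithinAt
  · intro x hx
    rw [interior_Icc] at hx
    rw [(hasDerivAt_M hx.1).deriv]
    exact M1_nonneg x ⟨hx.1, hx.2.le⟩

lemma M_concave : ConcaveOn ℝ (Icc (1/2:ℝ) 1) M := by
  apply AntitoneOn.concaveOn_of_deriv (convex_Icc _ _) contM.continuousOn
  · intro x hx
    rw [interior_Icc] at hx
    exact (hasDerivAt_M (by linarith [hx.1] : (0:ℝ) < x)).differentiableAt.differentiableWithinAt
  · rw [interior_Icc]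
    intro x hx y hy hxy
    rw [(hasDerivAt_M (by linarith [hx.1] : (0:ℝ) < x)).deriv,
        (hasDerivAt_M (by linarith [hy.1] : (0:ℝ) < y)).deriv]
    exact M1_anti ⟨by linarith [hx.1], hx.2.le⟩ ⟨by linarith [hy.1], hy.2.le⟩ hxy

lemma M_half : M (1/2) = Real.log 5 / 2 := by
  unfold M
  have h1 : (1:ℝ) + (1/2)^2 = 5/4 := by norm_num
  rw [h1, Real.log_div (by norm_num) (by norm_num),
    show (1:ℝ)/2 = 2⁻¹ by norm_num, Real.log_inv,
    show (4:ℝ) = 2^2 by norm_num, Real.log_pow]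
  push_cast
  ring

lemma M_one : M 1 = Real.log 2 := by
  unfold M
  norm_num

lemma M_ge_log2 : ∀ s ∈ Icc (1/2:ℝ) 1, Real.log 2 ≤ M s := by
  intro s hs
  obtain ⟨hs1, hs2⟩ := hs
  set t : ℝ := 2*s - 1 with ht
  have ht0 : 0 ≤ t := by simp [ht]; linarith
  have hcomb : (1 - t) • (1/2:ℝ) + t • (1:ℝ) = s := by
    simp [ht, smul_eq_mul]; ring
  have hc := M_concave.2 (show (1/2:ℝ) ∈ Icc (1/2:ℝ) 1 by norm_num)
    (show (1:ℝ) ∈ Icc (1/2:ℝ) 1 by norm_num) (by linarith : (0:ℝ) ≤ 1 - t) ht0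
    (by ring : (1 - t) + t = 1)
  rw [hcomb, M_half, M_one] at hc
  have h5 : Real.log 4 ≤ Real.log 5 := Real.log_le_log (by norm_num) (by norm_num)
  have h4 : Real.log 4 = 2 * Real.log 2 := by
    rw [show (4:ℝ) = 2^2 by norm_num, Real.log_pow]; push_cast; ring
  have hlog2 : Real.log 2 ≤ Real.log 5 / 2 := by linarith
  calc Real.log 2 = (1-t) * Real.log 2 + t * Real.log 2 := by ring
    _ ≤ (1-t) * (Real.log 5 / 2) + t * Real.log 2 := by nlinarith
    _ ≤ M s := by simpa [smul_eq_mul] using hc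


lemma D_one : D 1 = 0 := by
  unfold D
  norm_num

lemma D_anti : AntitoneOn D (Icc (1/2:ℝ) 1) := by
  apply antitoneOn_of_deriv_nonpos (convex_Icc _ _) contD.continuousOn
  · intro x hx
    rw [interior_Icc] at hx
    exact (hasDerivAt_D (by linarith [hx.1] : (0:ℝ) < x)).differentiableAt.differentiableWithinAt
  · intro x hx
    rw [interior_Icc] at hx
    rw [(hasDerivAt_D (by linarith [hx.1] : (0:ℝ) < x)).deriv]
    unfold D1
    have := M_ge_log2 x ⟨hx.1.le, hx.2.le⟩
    linarith

lemma D_nonneg_right : ∀ s ∈ Icc (1/2:ℝ) 1, 0 ≤ D s := by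
  intro s hs
  have := D_anti hs (show (1:ℝ) ∈ Icc (1/2:ℝ) 1 by norm_num) hs.2
  rw [D_one] at this
  linarith

lemma D_zero : D 0 = 0 := by
  unfold D
  norm_num

lemma D_concave : ConcaveOn ℝ (Icc (0:ℝ) (1/2)) D := by
  apply AntitoneOn.concaveOn_of_deriv (convex_Icc _ _) contD.continuousOn
  · intro x hx
    rw [interior_Icc] at hx
    exact (hasDerivAt_D hx.1).differentiableAt.differentiableWithinAt
  · rw [interior_Icc]
    intro x hx y hy hxy
    rw [(hasDerivAt_D hx.1).deriv, (hasDerivAt_D hy.1).deriv]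
    unfold D1
    have := M_mono (show x ∈ Icc (0:ℝ) (1/2) from ⟨hx.1.le, hx.2.le⟩)
      (show y ∈ Icc (0:ℝ) (1/2) from ⟨hy.1.le, hy.2.le⟩) hxy
    linarith

lemma D_nonneg : ∀ s ∈ Icc (0:ℝ) 1, 0 ≤ D s := by
  intro s hs
  rcases le_total s (1/2) with h | h
  · set t : ℝ := 2*s with ht
    have ht0 : 0 ≤ t := by simp [ht]; linarith [hs.1]
    have hcomb : (1 - t) • (0:ℝ) + t • (1/2:ℝ) = s := by
      simp [ht, smul_eq_mul]; ring
    have hc := D_concave.2 (show (0:ℝ) ∈ Icc (0:ℝ) (1/2) by norm_num)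
      (show (1/2:ℝ) ∈ Icc (0:ℝ) (1/2) by norm_num) (by linarith : (0:ℝ) ≤ 1 - t) ht0
      (by ring : (1 - t) + t = 1)
    rw [hcomb, D_zero] at hc
    have hD2 := D_nonneg_right (1/2) (by norm_num)
    have hnn : (0:ℝ) ≤ t * D (1/2) := mul_nonneg ht0 hD2
    calc (0:ℝ) ≤ (1-t) * 0 + t * D (1/2) := by linarith
      _ ≤ D s := by simpa [smul_eq_mul] using hc
  · exact D_nonneg_right s ⟨h, hs.2⟩

/-- Key inequality ★★ -/
lemma key_s : ∀ s : ℝ, 0 ≤ s → s ≤ 1 →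
    (1 + s^2) * Real.log (1 + s^2) ≤ 2*Real.log 2*s + 2*(s^2 * Real.log s) := by
  intro s h0 h1
  have := D_nonneg s ⟨h0, h1⟩
  unfold D at this
  nlinarith [this]

/-- ★: for 0 ≤ b ≤ a -/
lemma star_le {a b : ℝ} (hb : 0 ≤ b) (hba : b ≤ a) :
    (a+b) * Real.log (a+b) ≤ a * Real.log a + b * Real.log b
      + 2 * Real.log 2 * Real.sqrt (a*b) := by
  rcases eq_or_lt_of_le hb with hb0 | hb0
  · simp [← hb0]
  rcases eq_or_lt_of_le (hb.trans hba) with ha0 | ha0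
  · exfalso; linarith
  set s : ℝ := Real.sqrt (b/a) with hsdef
  have hs0 : 0 ≤ s := Real.sqrt_nonneg _
  have hsq : s^2 = b/a := Real.sq_sqrt (by positivity)
  have hs1 : s ≤ 1 := by
    rw [show (1:ℝ) = Real.sqrt 1 by simp [Real.sqrt_one]]
    apply Real.sqrt_le_sqrt
    rw [div_le_one ha0]; exact hba
  have key := key_s s hs0 hs1
  have h1s : 1 + s^2 = (a+b)/a := by rw [hsq]; field_simp
  have hlog1s : Real.log (1 + s^2) = Real.log (a+b) - Real.log a := by
    rw [h1s, Real.log_div (by positivity) (ne_of_gt ha0)]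
  have hlogs : Real.log s = (Real.log b - Real.log a)/2 := by
    rw [hsdef, Real.log_sqrt (by positivity), Real.log_div (ne_of_gt hb0) (ne_of_gt ha0)]
  have hsab : a * s = Real.sqrt (a*b) := by
    rw [hsdef, show a = Real.sqrt (a^2) by rw [Real.sqrt_sq ha0.le]]
    · rw [← Real.sqrt_mul (by positivity)]
      congr 1; rw [Real.sqrt_sq ha0.le]; field_simp
  -- multiply key by a
  have key2 : a * ((1 + s^2) * Real.log (1 + s^2))
      ≤ a * (2*Real.log 2*s + 2*(s^2 * Real.log s)) := by
    exact mul_le_mul_of_nonneg_left key ha0.le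
  rw [hlog1s, hlogs, h1s] at key2
  have e1 : a * ((a+b)/a * (Real.log (a+b) - Real.log a))
      = (a+b) * Real.log (a+b) - (a+b) * Real.log a := by field_simp
  have e2 : a * (2*Real.log 2*s + 2*((b/a) * ((Real.log b - Real.log a)/2)))
      = 2*Real.log 2*(a*s) + b * Real.log b - b * Real.log a := by field_simp; ring
  rw [hsq] at key2
  rw [e1, e2, hsab] at key2
  nlinarith [key2]

lemma star_all {a b : ℝ} (ha : 0 ≤ a) (hb : 0 ≤ b) :
    (a+b) * Real.log (a+b) ≤ a * Real.log a + b * Real.log b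
      + 2 * Real.log 2 * Real.sqrt (a*b) := by
  rcases le_total b a with h | h
  · exact star_le hb h
  · have := star_le ha h
    rw [add_comm b a, mul_comm b a] at this
    linarith

/-- pointwise inequality in logb form -/
lemma pointwise_logb {a b : ℝ} (ha : 0 ≤ a) (hb : 0 ≤ b) :
    -(a/2 * Real.logb 2 (a/2)) - (b/2 * Real.logb 2 (b/2))
      ≤ -((a+b)/2 * Real.logb 2 ((a+b)/2)) + Real.sqrt (a*b) := by
  have hlog2 : (0:ℝ) < Real.log 2 := Real.log_pos (by norm_num)
  rcases eq_or_lt_of_le ha with ha0 | ha0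
  · simp [← ha0]
  rcases eq_or_lt_of_le hb with hb0 | hb0
  · simp [← hb0]
  have hs : 0 ≤ Real.sqrt (a*b) := Real.sqrt_nonneg _
  have hstar := star_all ha hb
  have hla : Real.log (a/2) = Real.log a - Real.log 2 := by
    rw [Real.log_div (ne_of_gt ha0) (by norm_num)]
  have hlb : Real.log (b/2) = Real.log b - Real.log 2 := by
    rw [Real.log_div (ne_of_gt hb0) (by norm_num)]
  have hlab : Real.log ((a+b)/2) = Real.log (a+b) - Real.log 2 := by
    rw [Real.log_div (by positivity) (by norm_num)]
  have KN : -(a/2 * Real.log (a/2)) - (b/2 * Real.log (b/2))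
      ≤ -((a+b)/2 * Real.log ((a+b)/2)) + Real.sqrt (a*b) * Real.log 2 := by
    rw [hla, hlb, hlab]; nlinarith [hstar]
  have H := (div_le_div_iff_of_pos_right hlog2).mpr KN
  simp only [Real.logb]
  convert H using 1
  · rfl
  · ring
  · field_simp

end AuxStmt11

/-- **Inequality (19)**: `C + Z ≥ 1` for BMS channels. If `p0, p1` are output pmfs related
by an involution `π` (`p1 y = p0 (π y)`), `X` is uniform on `{0,1}` and `Y` has conditional
law `P(Y = y ∣ X = b) = p_b(y)`, then `I(X;Y) + ∑_y √(p0 y · p1 y) ≥ 1`. -/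
theorem stmt11 {Ω : Type} [Fintype Ω] (p : Ω → ℝ) (hp : IsPMF p)
    {γ : Type} [Fintype γ] (p0 p1 : γ → ℝ)
    (h0 : (∀ y, 0 ≤ p0 y) ∧ ∑ y, p0 y = 1)
    (h1 : (∀ y, 0 ≤ p1 y) ∧ ∑ y, p1 y = 1)
    (π : γ → γ) (hinv : ∀ y, π (π y) = y) (hsym : ∀ y, p1 y = p0 (π y))
    (X : Ω → Bool) (Y : Ω → γ)
    (hjoint : ∀ b y, prob p (fun ω => (X ω, Y ω)) (b, y)
      = (1 / 2 : ℝ) * (if b then p1 y else p0 y)) :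
    1 ≤ mutInfo p X Y + ∑ y, Real.sqrt (p0 y * p1 y) := by
  have hmargX : ∀ b, prob p X b = ∑ y, prob p (fun ω => (X ω, Y ω)) (b, y) := by
    intro b
    unfold prob
    rw [Finset.sum_comm]
    apply Finset.sum_congr rfl
    intro ω _
    rcases eq_or_ne (X ω) b with h | h
    · simp [Prod.ext_iff, h]
    · simp [Prod.ext_iff, h]
  have hmargY : ∀ y, prob p Y y = ∑ b, prob p (fun ω => (X ω, Y ω)) (b, y) := by
    intro y
    unfold prob
    rw [Finset.sum_comm]
    apply Finset.sum_congr rfl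
    intro ω _
    rcases eq_or_ne (Y ω) y with h | h
    · simp [Prod.ext_iff, h]
    · simp [Prod.ext_iff, h]
  have hX : ∀ b, prob p X b = 1/2 := by
    intro b
    rw [hmargX b]
    cases b <;> simp only [hjoint] <;>
      [rw [← Finset.mul_sum]; rw [← Finset.mul_sum]] <;> simp [h0.2, h1.2]
  have hY : ∀ y, prob p Y y = (p0 y + p1 y)/2 := by
    intro y
    rw [hmargY y, Fintype.sum_bool, hjoint, hjoint]
    simp; ring
  have hHX : entropy p X = 1 := by
    unfold entropy
    rw [Fintype.sum_bool, hX true, hX false]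
    have : Real.logb 2 (1/2) = -1 := by
      rw [show (1:ℝ)/2 = (2:ℝ)⁻¹ by norm_num, Real.logb_inv,
        Real.logb_self_eq_one (by norm_num)]
    rw [this]; norm_num
  have hHXY : entropy p (fun ω => (X ω, Y ω))
      = -∑ y, (p0 y/2 * Real.logb 2 (p0 y/2) + p1 y/2 * Real.logb 2 (p1 y/2)) := by
    unfold entropy
    rw [Fintype.sum_prod_type, Fintype.sum_bool]
    simp only [hjoint]
    rw [← Finset.sum_add_distrib]
    congr 1
    apply Finset.sum_congr rfl
    intro y _
    norm_num
    ring
  have hHY : entropy p Y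
      = -∑ y, ((p0 y + p1 y)/2 * Real.logb 2 ((p0 y + p1 y)/2)) := by
    unfold entropy
    apply congrArg
    apply Finset.sum_congr rfl
    intro y _
    rw [hY y]
  have key : entropy p (fun ω => (X ω, Y ω))
      ≤ entropy p Y + ∑ y, Real.sqrt (p0 y * p1 y) := by
    rw [hHXY, hHY]
    have H : ∑ y, (-(p0 y/2 * Real.logb 2 (p0 y/2)) - (p1 y/2 * Real.logb 2 (p1 y/2)))
        ≤ ∑ y, (-((p0 y + p1 y)/2 * Real.logb 2 ((p0 y + p1 y)/2)) + Real.sqrt (p0 y * p1 y)) :=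
      Finset.sum_le_sum fun y _ => pointwise_logb (h0.1 y) (h1.1 y)
    rw [Finset.sum_add_distrib] at H
    have e1 : ∑ y, (-(p0 y/2 * Real.logb 2 (p0 y/2)) - (p1 y/2 * Real.logb 2 (p1 y/2)))
        = -∑ y, (p0 y/2 * Real.logb 2 (p0 y/2) + p1 y/2 * Real.logb 2 (p1 y/2)) := by
      rw [← Finset.sum_neg_distrib]
      apply Finset.sum_congr rfl
      intros; ring
    have e2 : ∑ y, (-((p0 y + p1 y)/2 * Real.logb 2 ((p0 y + p1 y)/2)))
        = -∑ y, ((p0 y + p1 y)/2 * Real.logb 2 ((p0 y + p1 y)/2)) :=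
      Finset.sum_neg_distrib _
    rw [e1, e2] at H
    linarith
  unfold mutInfo
  rw [hHX]
  linarith [key]
end
end

section
/- (Monte-Carlo identity for the MIS leakage over a BEC, Section V of the paper.) Let V be uniformly distributed on F_2^m, let M be an m × s matrix over F_2, and let A ⊆ {1,…,m}. Set U = V_A = (V_i)_{i∈A} and Z = V·M ∈ F_2^s. Then I(U; Z) = dim( colSpan(M) ∩ U_A ), where colSpan(M) ⊆ F_2^m is the span of the columns of M, U_A = {x ∈ F_2^m : x_i = 0 for all i ∉ A} is the span of the standard basis vectors e_i with i ∈ A, and mutual information is measured in bits (logarithm base 2). -/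
open scoped Classical

noncomputable section

/-! ### Auxiliary lemmas -/

/-- Pushforward formula for `prob`. -/
lemma prob_comp {Ω α β : Type} [Fintype Ω] (p : Ω → ℝ) [Fintype α]
    (V : Ω → α) (g : α → β) (b : β) :
    prob p (fun ω => g (V ω)) b = ∑ v, if g v = b then prob p V v else 0 := by
  classical
  unfold prob
  have h1 : ∀ v : α, (if g v = b then (∑ ω, if V ω = v then p ω else 0) else 0)
      = ∑ ω, if V ω = v then (if g v = b then p ω else 0) else 0 := by
    intro v
    split <;> simp
  simp only [h1]
  rw [Finset.sum_comm]
  refine Finset.sum_congr rfl fun ω _ => ?_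
  rw [Finset.sum_ite_eq]
  simp

/-- The fibers of a linear map over points in its range have the cardinality of the kernel. -/
lemma card_fiber {m : ℕ} {α : Type} [AddCommGroup α] [Module (ZMod 2) α]
    (f : (Fin m → ZMod 2) →ₗ[ZMod 2] α) (a : α) (ha : a ∈ LinearMap.range f) :
    Fintype.card {v : Fin m → ZMod 2 // f v = a} = Fintype.card (LinearMap.ker f) := by
  obtain ⟨v0, hv0⟩ := ha
  refine Fintype.card_congr ?_
  refine
    { toFun := fun v => ⟨v.1 - v0, ?_⟩
      invFun := fun x => ⟨v0 + x.1, ?_⟩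
      left_inv := fun v => by ext; simp
      right_inv := fun x => by ext; simp }
  · have hv := v.2
    simp [LinearMap.mem_ker, map_sub, hv, hv0]
  · have hx := LinearMap.mem_ker.mp x.2
    simp [map_add, hv0, hx]

/-- Entropy of a linear function of a uniform random vector on `F_2^m`. -/
lemma entropy_linear {Ω : Type} [Fintype Ω] (p : Ω → ℝ) {m : ℕ}
    (V : Ω → (Fin m → ZMod 2)) (hV : ∀ v, prob p V v = (1 / 2 : ℝ) ^ m)
    {α : Type} [Fintype α] [AddCommGroup α] [Module (ZMod 2) α]
    (f : (Fin m → ZMod 2) →ₗ[ZMod 2] α) :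
    entropy p (fun ω => f (V ω))
      = (m : ℝ) - (Module.finrank (ZMod 2) (LinearMap.ker f) : ℝ) := by
  classical
  set k := Module.finrank (ZMod 2) (LinearMap.ker f) with hk
  set r := Module.finrank (ZMod 2) (LinearMap.range f) with hr
  have hrk : r + k = m := by
    have h := LinearMap.finrank_range_add_finrank_ker f
    rwa [Module.finrank_pi, Fintype.card_fin] at h
  have h2 : (2 : ℝ) ^ r * (1 / 2 : ℝ) ^ r = 1 := by
    rw [← mul_pow]; norm_num
  have hprob : ∀ a, prob p (fun ω => f (V ω)) a
      = if a ∈ LinearMap.range f then ((1 : ℝ) / 2) ^ r else 0 := by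
    intro a
    rw [prob_comp]
    simp only [hV]
    by_cases ha : a ∈ LinearMap.range f
    · rw [if_pos ha, ← Finset.sum_filter, Finset.sum_const, nsmul_eq_mul]
      have hcard : (Finset.univ.filter (fun v => f v = a)).card
          = Fintype.card (LinearMap.ker f) := by
        rw [← Fintype.card_subtype]
        exact card_fiber f a ha
      rw [hcard, Module.card_eq_pow_finrank (K := ZMod 2), ZMod.card, ← hk]
      have h2k : (2 : ℝ) ^ k * (1 / 2 : ℝ) ^ k = 1 := by
        rw [← mul_pow]; norm_num
      push_cast
      rw [← hrk, pow_add]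
      linear_combination ((1 / 2 : ℝ)) ^ r * h2k
    · rw [if_neg ha]
      have hno : ∀ v, ¬ f v = a := fun v hv => ha ⟨v, hv⟩
      simp [hno]
  unfold entropy
  have hterm : ∀ a, prob p (fun ω => f (V ω)) a
        * Real.logb 2 (prob p (fun ω => f (V ω)) a)
      = if a ∈ LinearMap.range f
          then ((1 / 2 : ℝ) ^ r * Real.logb 2 ((1 / 2 : ℝ) ^ r)) else 0 := by
    intro a
    rw [hprob]
    split <;> simp
  have hcardr : (Finset.univ.filter (fun a => a ∈ LinearMap.range f)).card = 2 ^ r := by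
    rw [← Fintype.card_subtype]
    have : Fintype.card (LinearMap.range f) = 2 ^ r := by
      rw [Module.card_eq_pow_finrank (K := ZMod 2), ZMod.card, ← hr]
    simpa using this
  have hlog : Real.logb 2 ((1 / 2 : ℝ) ^ r) = -(r : ℝ) := by
    rw [one_div, inv_pow, Real.logb_inv, Real.logb_pow,
      Real.logb_self_eq_one (by norm_num)]
    ring
  simp only [hterm]
  rw [← Finset.sum_filter, Finset.sum_const, nsmul_eq_mul, hcardr, hlog]
  have hm : (r : ℝ) + (k : ℝ) = (m : ℝ) := by exact_mod_cast hrk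
  push_cast
  nlinarith [h2]

/-- The standard dot-product bilinear form on `F_2^m`. -/
def dotForm (m : ℕ) : LinearMap.BilinForm (ZMod 2) (Fin m → ZMod 2) :=
  LinearMap.mk₂ (ZMod 2) (fun v w => ∑ i, v i * w i)
    (fun a b w => by simp [add_mul, Finset.sum_add_distrib])
    (fun c a w => by simp [smul_eq_mul, mul_assoc, Finset.mul_sum])
    (fun v a b => by simp [mul_add, Finset.sum_add_distrib])
    (fun c v w => by simp [smul_eq_mul, Finset.mul_sum, mul_left_comm])

lemma dotForm_apply {m : ℕ} (v w : Fin m → ZMod 2) :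
    dotForm m v w = ∑ i, v i * w i := rfl

lemma dotForm_single {m : ℕ} (i : Fin m) (v : Fin m → ZMod 2) :
    dotForm m (Pi.single i 1) v = v i := by
  rw [dotForm_apply]
  simp [Pi.single_apply, ite_mul]

lemma dotForm_symm {m : ℕ} (v w : Fin m → ZMod 2) : dotForm m v w = dotForm m w v := by
  simp [dotForm_apply, mul_comm]

lemma dotForm_refl {m : ℕ} : (dotForm m).IsRefl := by
  intro v w h
  rwa [dotForm_symm]

lemma dotForm_nondeg {m : ℕ} : (dotForm m).Nondegenerate := by
  refine ⟨fun v h => ?_, fun v h => ?_⟩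
  · funext i
    have := h (Pi.single i 1)
    rw [dotForm_symm, dotForm_single] at this
    simpa using this
  · funext i
    have := h (Pi.single i 1)
    rw [dotForm_single] at this
    simpa using this

/-- Membership in the orthogonal of a span. -/
lemma mem_orthogonal_span {m : ℕ} (S : Set (Fin m → ZMod 2)) (v : Fin m → ZMod 2) :
    v ∈ (dotForm m).orthogonal (Submodule.span (ZMod 2) S) ↔
      ∀ s ∈ S, dotForm m s v = 0 := by
  rw [LinearMap.BilinForm.mem_orthogonal_iff]
  constructor
  · intro h s hs
    exact h s (Submodule.subset_span hs)
  · intro h n hn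
    induction hn using Submodule.span_induction with
    | mem x hx => exact h x hx
    | zero => simp
    | add x y hx hy ihx ihy => simp [map_add, ihx, ihy]
    | smul c x hx ihx => simp [map_smul, ihx]

lemma orthogonal_sup {m : ℕ} (N₁ N₂ : Submodule (ZMod 2) (Fin m → ZMod 2)) :
    (dotForm m).orthogonal (N₁ ⊔ N₂)
      = (dotForm m).orthogonal N₁ ⊓ (dotForm m).orthogonal N₂ := by
  ext v
  simp only [Submodule.mem_inf, LinearMap.BilinForm.mem_orthogonal_iff]
  constructor
  · intro h
    exact ⟨fun n hn => h n (Submodule.mem_sup_left hn),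
      fun n hn => h n (Submodule.mem_sup_right hn)⟩
  · rintro ⟨h1, h2⟩ n hn
    obtain ⟨a, ha, b, hb, rfl⟩ := Submodule.mem_sup.mp hn
    have hA := h1 a ha
    have hB := h2 b hb
    simp [map_add, hA, hB]

lemma key_finrank {m : ℕ} (W : Submodule (ZMod 2) (Fin m → ZMod 2)) :
    Module.finrank (ZMod 2) W
      + Module.finrank (ZMod 2) ((dotForm m).orthogonal W) = m := by
  have h := LinearMap.BilinForm.finrank_add_finrank_orthogonal (dotForm_refl) W
  rw [LinearMap.BilinForm.orthogonal_top_eq_bot dotForm_nondeg, inf_bot_eq,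
    finrank_bot, Module.finrank_pi, Fintype.card_fin] at h
  exact h

/-- **Monte-Carlo identity** for the MIS leakage over a BEC: for `V` uniform on `F_2^m`,
`U = V_A` and `Z = V⬝M`,
`I(U ; Z) = dim (colSpan M ⊓ U_A)`, where `U_A` is the span of the standard basis
vectors `e_i`, `i ∈ A`. -/
theorem stmt14 {Ω : Type} [Fintype Ω] (p : Ω → ℝ) (hp : IsPMF p)
    {m s : ℕ} (M : Matrix (Fin m) (Fin s) (ZMod 2))
    (V : Ω → (Fin m → ZMod 2))
    (hV : ∀ v, prob p V v = (1 / 2 : ℝ) ^ m)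
    (A : Finset (Fin m)) :
    mutInfo p (fun ω (i : {i // i ∈ A}) => V ω i.1) (fun ω => Matrix.vecMul (V ω) M)
      = (Module.finrank (ZMod 2)
          ↥(Submodule.span (ZMod 2) (Set.range fun j => fun i => M i j)
            ⊓ Submodule.span (ZMod 2)
                ((fun i => (Pi.single i 1 : Fin m → ZMod 2)) '' (A : Set (Fin m)))) : ℝ) := by
  classical
  set W1 : Submodule (ZMod 2) (Fin m → ZMod 2) :=
    Submodule.span (ZMod 2) (Set.range fun j => fun i => M i j) with hW1
  set W2 : Submodule (ZMod 2) (Fin m → ZMod 2) :=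
    Submodule.span (ZMod 2)
      ((fun i => (Pi.single i 1 : Fin m → ZMod 2)) '' (A : Set (Fin m))) with hW2
  let fU : (Fin m → ZMod 2) →ₗ[ZMod 2] ({i // i ∈ A} → ZMod 2) :=
    LinearMap.funLeft (ZMod 2) (ZMod 2) Subtype.val
  let fZ : (Fin m → ZMod 2) →ₗ[ZMod 2] (Fin s → ZMod 2) := M.vecMulLinear
  -- identify the kernels with orthogonal complements
  have e2 : LinearMap.ker fZ = (dotForm m).orthogonal W1 := by
    ext v
    rw [hW1, mem_orthogonal_span, LinearMap.mem_ker]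
    constructor
    · rintro h w ⟨j, rfl⟩
      have hj := congrFun h j
      rw [dotForm_apply]
      change Matrix.vecMul v M j = 0 at hj
      simp only [Matrix.vecMulLinear_apply, Matrix.vecMul, dotProduct] at hj
      calc ∑ i, M i j * v i = ∑ i, v i * M i j := by
            exact Finset.sum_congr rfl fun i _ => mul_comm _ _
        _ = 0 := hj
    · intro h
      funext j
      have hj := h _ ⟨j, rfl⟩
      rw [dotForm_apply] at hj
      simp only [Matrix.vecMulLinear_apply, Matrix.vecMul, dotProduct, Pi.zero_apply]
      calc ∑ i, v i * M i j = ∑ i, M i j * v i := by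
            exact Finset.sum_congr rfl fun i _ => mul_comm _ _
        _ = 0 := hj
  have e1 : LinearMap.ker fU = (dotForm m).orthogonal W2 := by
    ext v
    rw [hW2, mem_orthogonal_span, LinearMap.mem_ker]
    constructor
    · rintro h w ⟨i, hi, rfl⟩
      rw [dotForm_single]
      exact congrFun h ⟨i, hi⟩
    · intro h
      funext i
      have := h (Pi.single i.1 1) ⟨i.1, i.2, rfl⟩
      rw [dotForm_single] at this
      exact this
  have e3 : LinearMap.ker (fU.prod fZ) = (dotForm m).orthogonal (W1 ⊔ W2) := by
    rw [LinearMap.ker_prod, e1, e2, orthogonal_sup, inf_comm]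
  -- rewrite the mutual information via entropies of linear images
  have hU : (fun ω (i : {i // i ∈ A}) => V ω i.1) = fun ω => fU (V ω) := rfl
  have hZ : (fun ω => Matrix.vecMul (V ω) M) = fun ω => fZ (V ω) := rfl
  rw [hU, hZ, mutInfo]
  have hUZ : (fun ω => (fU (V ω), fZ (V ω))) = fun ω => (fU.prod fZ) (V ω) := rfl
  rw [hUZ, entropy_linear p V hV fU, entropy_linear p V hV fZ,
    entropy_linear p V hV (fU.prod fZ), e1, e2, e3]
  -- finrank bookkeeping
  have k1 := key_finrank W1
  have k2 := key_finrank W2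
  have k3 := key_finrank (W1 ⊔ W2)
  have k4 := Submodule.finrank_sup_add_finrank_inf_eq W1 W2
  have c1 : (Module.finrank (ZMod 2) W1 : ℝ)
      + (Module.finrank (ZMod 2) ((dotForm m).orthogonal W1) : ℝ) = m := by exact_mod_cast k1
  have c2 : (Module.finrank (ZMod 2) W2 : ℝ)
      + (Module.finrank (ZMod 2) ((dotForm m).orthogonal W2) : ℝ) = m := by exact_mod_cast k2
  have c3 : (Module.finrank (ZMod 2) (W1 ⊔ W2 : Submodule (ZMod 2) (Fin m → ZMod 2)) : ℝ)
      + (Module.finrank (ZMod 2) ((dotForm m).orthogonal (W1 ⊔ W2)) : ℝ) = m := by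
    exact_mod_cast k3
  have c4 : (Module.finrank (ZMod 2) (W1 ⊔ W2 : Submodule (ZMod 2) (Fin m → ZMod 2)) : ℝ)
      + (Module.finrank (ZMod 2) (W1 ⊓ W2 : Submodule (ZMod 2) (Fin m → ZMod 2)) : ℝ)
      = (Module.finrank (ZMod 2) W1 : ℝ) + (Module.finrank (ZMod 2) W2 : ℝ) := by
    exact_mod_cast k4
  linarith
end
end
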